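/- arXiv:1306.3911 — 5 statements merged into one kernel-verified Lean document; each statement's English description precedes it below -/
import Mathlib

section
/- For every n ≥ 0 and every bounded measurable function f on X_n, the bootstrap particle estimator of the unnormalized Feynman-Kac measure is unbiased: E[γ_n^{N1}(f)] = γ_n(f), where γ_n^{N1}(f) = η_n^{N1}(f) · ∏_{0 ≤ p < n} η_p^{N1}(G_p). -/
open MeasureTheory ProbabilityTheory Filter Finset
open scoped ENNReal NNReal Topology Classical

noncomputable section

namespace FKisland

/-- Unnormalized Feynman-Kac measures `γ_n`:
`γ_0 = init` and `γ_{n+1}(f) = γ_n (G_n ⋅ step_{n+1} f)`. -/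
def gammaSeq {S : ℕ → Type*} [∀ n, MeasurableSpace (S n)]
    (init : Measure (S 0)) (step : ∀ n, S n → Measure (S (n + 1)))
    (G : ∀ n, S n → ℝ) : (n : ℕ) → Measure (S n)
  | 0 => init
  | n + 1 => ((gammaSeq init step G n).withDensity
      (fun x => ENNReal.ofReal (G n x))).bind (step n)

/-- Normalized Feynman-Kac measures `η_n = γ_n / γ_n(1)`. -/
def etaSeq {S : ℕ → Type*} [∀ n, MeasurableSpace (S n)]
    (init : Measure (S 0)) (step : ∀ n, S n → Measure (S (n + 1)))
    (G : ∀ n, S n → ℝ) (n : ℕ) : Measure (S n) :=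
  (gammaSeq init step G n Set.univ)⁻¹ • gammaSeq init step G n

/-- Feynman-Kac semigroup `Q_{p,p+k} = Q_{p+1} Q_{p+2} ⋯ Q_{p+k}` acting on functions,
where `Q_{l+1} g (x) = G_l(x) ∫ g(y) step_l(x,dy)`. -/
def Qop {S : ℕ → Type*} [∀ n, MeasurableSpace (S n)]
    (step : ∀ n, S n → Measure (S (n + 1))) (G : ∀ n, S n → ℝ) :
    (p k : ℕ) → (S (p + k) → ℝ) → S p → ℝ
  | _, 0, f => f
  | p, k + 1, f => Qop step G p k (fun x => G (p + k) x * ∫ y, f y ∂(step (p + k) x))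

/-- `Q_{p,n}` for `p ≤ n`. -/
def Qle {S : ℕ → Type*} [∀ n, MeasurableSpace (S n)]
    (step : ∀ n, S n → Measure (S (n + 1))) (G : ∀ n, S n → ℝ)
    {p n : ℕ} (h : p ≤ n) (f : S n → ℝ) : S p → ℝ :=
  Qop step G p (n - p) (fun y => f (cast (congrArg S (Nat.add_sub_cancel' h)) y))

/-- Normalized semigroup `Q̄_{p,p+k} = Q_{p,p+k} / η_p(Q_{p,p+k} 1)`. -/
def Qbar {S : ℕ → Type*} [∀ n, MeasurableSpace (S n)]
    (init : Measure (S 0)) (step : ∀ n, S n → Measure (S (n + 1)))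
    (G : ∀ n, S n → ℝ) (p k : ℕ) (f : S (p + k) → ℝ) : S p → ℝ :=
  fun x => Qop step G p k f x /
    ∫ z, Qop step G p k (fun _ => (1 : ℝ)) z ∂(etaSeq init step G p)

/-- Normalized semigroup `Q̄_{p,n}` for `p ≤ n`. -/
def Qbarle {S : ℕ → Type*} [∀ n, MeasurableSpace (S n)]
    (init : Measure (S 0)) (step : ∀ n, S n → Measure (S (n + 1)))
    (G : ∀ n, S n → ℝ) {p n : ℕ} (h : p ≤ n) (f : S n → ℝ) : S p → ℝ :=
  fun x => Qle step G h f x /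
    ∫ z, Qle step G h (fun _ => (1 : ℝ)) z ∂(etaSeq init step G p)

/-- Boltzmann-Gibbs transformation `Ψ(μ)(dx) = G(x) μ(dx) / μ(G)`. -/
def boltzmannGibbs {α : Type*} [MeasurableSpace α] (G : α → ℝ) (μ : Measure α) :
    Measure α :=
  (∫⁻ x, ENNReal.ofReal (G x) ∂μ)⁻¹ • μ.withDensity fun x => ENNReal.ofReal (G x)

/-- One bootstrap selection/mutation step (`boldM_{n+1}`): each of the `N` new particles is
drawn independently from the mixture `Σ_j G(x^j) M(x^j, ⋅) / Σ_k G(x^k)`. -/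
def bootStep {α β : Type*} [MeasurableSpace α] [MeasurableSpace β]
    (M : α → Measure β) (G : α → ℝ) {N : ℕ} (x : Fin N → α) :
    Measure (Fin N → β) :=
  Measure.pi fun _ : Fin N =>
    (∑ k, ENNReal.ofReal (G (x k)))⁻¹ • ∑ j, ENNReal.ofReal (G (x j)) • M (x j)

/-- ε-bootstrap selection kernel
`S_{n,μ}(x, ⋅) = ε G(x) δ_x + (1 - ε G(x)) Ψ(μ)`. -/
def epsSelect {α : Type*} [MeasurableSpace α]
    (G : α → ℝ) (ε : ℝ) (μ : Measure α) (x : α) : Measure α :=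
  ENNReal.ofReal (ε * G x) • Measure.dirac x
    + ENNReal.ofReal (1 - ε * G x) • boltzmannGibbs G μ

/-- Empirical measure of a configuration. -/
def empMeasure {α : Type*} [MeasurableSpace α] {N : ℕ} (x : Fin N → α) : Measure α :=
  (N : ℝ≥0∞)⁻¹ • ∑ i, Measure.dirac (x i)

/-- One ε-bootstrap particle step: coordinate `i` moves with `S_{n, m(x)} M` started at `x^i`. -/
def epsBootStep {α β : Type*} [MeasurableSpace α] [MeasurableSpace β]
    (M : α → Measure β) (G : α → ℝ) (ε : ℝ) {N : ℕ} (x : Fin N → α) :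
    Measure (Fin N → β) :=
  Measure.pi fun i : Fin N => (epsSelect G ε (empMeasure x) (x i)).bind M

/-- One ESS particle step on weighted configurations: if the effective sample size
`(Σ w G)² / Σ (wG)²` is at least `a N`, keep the particles (mutating them) and multiply the
weights by the potential; otherwise resample multinomially and reset all weights to 1. -/
def essStep {α β : Type*} [MeasurableSpace α] [MeasurableSpace β]
    (M : α → Measure β) (G : α → ℝ) (a : ℝ) {N : ℕ} (xw : Fin N → α × ℝ) :
    Measure (Fin N → β × ℝ) :=
  if (∑ i, (xw i).2 * G (xw i).1) ^ 2 / (∑ i, ((xw i).2 * G (xw i).1) ^ 2) ≥ a * N then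
    Measure.pi fun i : Fin N => (M (xw i).1).map fun y => (y, (xw i).2 * G (xw i).1)
  else
    Measure.pi fun _ : Fin N =>
      ((∑ k, ENNReal.ofReal ((xw k).2 * G (xw k).1))⁻¹ •
          ∑ j, ENNReal.ofReal ((xw j).2 * G (xw j).1) • M (xw j).1).map
        fun y => (y, (1 : ℝ))

/-- The process `ξ` on the time-varying state spaces `S n` is a Markov chain with initial
law `init` and transition steps `step`, characterized through products of bounded
measurable functionals of the path. -/
def IsMarkovApprox {Ω : Type*} [MeasurableSpace Ω] (P : Measure Ω)
    {S : ℕ → Type*} [∀ n, MeasurableSpace (S n)]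
    (init : Measure (S 0)) (step : ∀ n, S n → Measure (S (n + 1)))
    (ξ : ∀ n, Ω → S n) : Prop :=
  (∀ n, Measurable (ξ n)) ∧
  P.map (ξ 0) = init ∧
  ∀ (n : ℕ) (F : ∀ p, S p → ℝ),
    (∀ p, Measurable (F p)) → (∀ p, ∃ C, ∀ x, |F p x| ≤ C) →
    ∀ (H : S (n + 1) → ℝ), Measurable H → (∃ C, ∀ x, |H x| ≤ C) →
      ∫ ω, (∏ p ∈ Finset.range (n + 1), F p (ξ p ω)) * H (ξ (n + 1) ω) ∂P
        = ∫ ω, (∏ p ∈ Finset.range (n + 1), F p (ξ p ω)) *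
            ∫ y, H y ∂(step n (ξ n ω)) ∂P

/-- Bootstrap local sampling errors `W_p^{N1}` along a configuration path `ξ`:
`W_0^{N1}(g) = √N1 (η_0^{N1}(g) - η_0(g))` and for `p ≥ 1`,
`W_p^{N1}(g) = √N1 (η_p^{N1}(g) - Φ_p(η_{p-1}^{N1})(g))` with `Φ_p(μ) = Ψ_{p-1}(μ) M_p`. -/
def localW {X : ℕ → Type*} [∀ n, MeasurableSpace (X n)]
    (η0 : Measure (X 0)) (M : ∀ n, Kernel (X n) (X (n + 1))) (G : ∀ n, X n → ℝ)
    (N1 : ℕ) (ξ : ∀ p, Fin N1 → X p) : (p : ℕ) → (X p → ℝ) → ℝ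
  | 0, g => Real.sqrt N1 * (((N1 : ℝ)⁻¹ * ∑ i, g (ξ 0 i)) - ∫ x, g x ∂η0)
  | p + 1, g => Real.sqrt N1 * (((N1 : ℝ)⁻¹ * ∑ i, g (ξ (p + 1) i))
      - (∑ i, G p (ξ p i) * ∫ y, g y ∂(M p (ξ p i))) / ∑ i, G p (ξ p i))

end FKisland

open FKisland

section StatementFiveAux

lemma aux5_integrable {α : Type*} [MeasurableSpace α] (P : Measure α) [IsFiniteMeasure P]
    {f : α → ℝ} (hf : Measurable f) {C : ℝ} (hC : ∀ x, |f x| ≤ C) : Integrable f P :=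
  (integrable_const C).mono' hf.aestronglyMeasurable
    (Filter.Eventually.of_forall fun x => by simpa [Real.norm_eq_abs] using hC x)

lemma aux5_pi_map_eval {ι : Type*} [Fintype ι] {α : ι → Type*} [∀ i, MeasurableSpace (α i)]
    (μ : ∀ i, Measure (α i)) [∀ i, IsProbabilityMeasure (μ i)] (i : ι) :
    (Measure.pi μ).map (fun x => x i) = μ i := by
  ext s hs
  rw [Measure.map_apply (measurable_pi_apply i) hs]
  have hset : (fun x : ∀ j, α j => x i) ⁻¹' s
      = Set.pi Set.univ (Function.update (fun j => (Set.univ : Set (α j))) i s) := by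
    ext x
    simp only [Set.mem_preimage, Set.mem_univ_pi]
    constructor
    · intro hx j
      rcases eq_or_ne j i with rfl | hj
      · rwa [Function.update_self]
      · rw [Function.update_of_ne hj]; trivial
    · intro hx
      have h := hx i
      rwa [Function.update_self] at h
  rw [hset, Measure.pi_pi]
  rw [Finset.prod_eq_single i (fun j _ hj => by rw [Function.update_of_ne hj]; simp)
    (fun h => absurd (Finset.mem_univ i) h)]
  rw [Function.update_self]

lemma aux5_integral_eval {ι : Type*} [Fintype ι] {α : ι → Type*} [∀ i, MeasurableSpace (α i)]
    (μ : ∀ i, Measure (α i)) [∀ i, IsProbabilityMeasure (μ i)] (i : ι)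
    {f : α i → ℝ} (hf : Measurable f) :
    ∫ x, f (x i) ∂Measure.pi μ = ∫ y, f y ∂μ i := by
  rw [← aux5_pi_map_eval μ i]
  exact (integral_map (measurable_pi_apply i).aemeasurable hf.aestronglyMeasurable).symm

lemma aux5_integral_bind_nonneg {α β : Type*} [MeasurableSpace α] [MeasurableSpace β]
    (μ : Measure α) (κ : Kernel α β) [IsMarkovKernel κ]
    {f : β → ℝ} (hf : Measurable f) (h0 : ∀ y, 0 ≤ f y) {C : ℝ} (hC : ∀ y, f y ≤ C) :
    ∫ y, f y ∂(μ.bind fun a => κ a) = ∫ a, ∫ y, f y ∂κ a ∂μ := by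
  have hmeasL : Measurable fun a => ∫⁻ y, ENNReal.ofReal (f y) ∂κ a :=
    Measurable.lintegral_kernel hf.ennreal_ofReal
  have hLle : ∀ a, (∫⁻ y, ENNReal.ofReal (f y) ∂κ a) ≤ ENNReal.ofReal C := by
    intro a
    calc ∫⁻ y, ENNReal.ofReal (f y) ∂κ a ≤ ∫⁻ _, ENNReal.ofReal C ∂κ a :=
          lintegral_mono fun y => ENNReal.ofReal_le_ofReal (hC y)
      _ = ENNReal.ofReal C := by simp
  have hLne : ∀ a, (∫⁻ y, ENNReal.ofReal (f y) ∂κ a) ≠ ⊤ :=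
    fun a => ((hLle a).trans_lt ENNReal.ofReal_lt_top).ne
  rw [integral_eq_lintegral_of_nonneg_ae (Filter.Eventually.of_forall h0)
    hf.aestronglyMeasurable,
    Measure.lintegral_bind κ.measurable.aemeasurable hf.ennreal_ofReal.aemeasurable]
  have hrepr : ∀ a, ∫ y, f y ∂κ a = (∫⁻ y, ENNReal.ofReal (f y) ∂κ a).toReal := fun a =>
    integral_eq_lintegral_of_nonneg_ae (Filter.Eventually.of_forall h0) hf.aestronglyMeasurable
  simp_rw [hrepr]
  rw [integral_eq_lintegral_of_nonneg_ae
    (Filter.Eventually.of_forall fun a => ENNReal.toReal_nonneg)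
    hmeasL.ennreal_toReal.aestronglyMeasurable]
  congr 1
  refine lintegral_congr fun a => ?_
  rw [ENNReal.ofReal_toReal (hLne a)]

lemma aux5_integral_bind {α β : Type*} [MeasurableSpace α] [MeasurableSpace β]
    (μ : Measure α) [IsFiniteMeasure μ] (κ : Kernel α β) [IsMarkovKernel κ]
    {f : β → ℝ} (hf : Measurable f) {C : ℝ} (hC : ∀ y, |f y| ≤ C) :
    ∫ y, f y ∂(μ.bind fun a => κ a) = ∫ a, ∫ y, f y ∂κ a ∂μ := by
  have hg0 : ∀ y, 0 ≤ f y + C := fun y => by have := (abs_le.1 (hC y)).1; linarith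
  have hgC : ∀ y, f y + C ≤ C + C := fun y => by have := (abs_le.1 (hC y)).2; linarith
  have hbind := aux5_integral_bind_nonneg μ κ (f := fun y => f y + C) (hf.add measurable_const) hg0 hgC
  have hfinbind : IsFiniteMeasure (μ.bind fun a => κ a) := by
    constructor
    rw [Measure.bind_apply MeasurableSet.univ κ.measurable.aemeasurable]
    simp only [measure_univ, lintegral_one]
    exact measure_lt_top μ _
  have hbind_univ : ((μ.bind fun a => κ a) Set.univ).toReal = (μ Set.univ).toReal := by
    rw [Measure.bind_apply MeasurableSet.univ κ.measurable.aemeasurable]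
    simp
  have hint_f : Integrable f (μ.bind fun a => κ a) := aux5_integrable _ hf hC
  have hintMf : Integrable (fun a => ∫ y, f y ∂κ a) μ := by
    refine aux5_integrable _ ?_ (C := |C|) ?_
    · exact (MeasureTheory.StronglyMeasurable.integral_kernel_prod_right (κ := κ)
        (f := fun _ y => f y) ((hf.comp measurable_snd).stronglyMeasurable)).measurable
    · intro a
      have h1 : ‖∫ y, f y ∂κ a‖ ≤ C * ((κ a) Set.univ).toReal :=
        norm_integral_le_of_norm_le_const
          (Filter.Eventually.of_forall fun y => by simpa [Real.norm_eq_abs] using hC y)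
      rw [Real.norm_eq_abs] at h1
      simpa [measure_univ] using h1.trans (by simp [le_abs_self])
  have h1 : ∫ y, f y + C ∂(μ.bind fun a => κ a)
      = ∫ y, f y ∂(μ.bind fun a => κ a) + C * (μ Set.univ).toReal := by
    rw [integral_add hint_f (integrable_const C), integral_const, measureReal_def, hbind_univ, smul_eq_mul,
      mul_comm]
  have h2 : ∫ a, ∫ y, f y + C ∂κ a ∂μ = (∫ a, ∫ y, f y ∂κ a ∂μ) + C * (μ Set.univ).toReal := by
    have hI : ∀ a, ∫ y, f y + C ∂κ a = ∫ y, f y ∂κ a + C := by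
      intro a
      rw [integral_add (aux5_integrable _ hf hC) (integrable_const C), integral_const]
      simp
    simp_rw [hI]
    rw [integral_add hintMf (integrable_const C), integral_const, measureReal_def, smul_eq_mul, mul_comm]
  rw [h1, h2] at hbind
  linarith

lemma aux5_wd_fin {α : Type*} [MeasurableSpace α] (μ : Measure α) [IsFiniteMeasure μ]
    {G : α → ℝ} {C : ℝ} (hC : ∀ x, G x ≤ C) :
    IsFiniteMeasure (μ.withDensity fun x => ENNReal.ofReal (G x)) := by
  constructor
  rw [withDensity_apply _ MeasurableSet.univ, Measure.restrict_univ]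
  calc ∫⁻ x, ENNReal.ofReal (G x) ∂μ ≤ ∫⁻ _, ENNReal.ofReal C ∂μ :=
        lintegral_mono fun x => ENNReal.ofReal_le_ofReal (hC x)
    _ = ENNReal.ofReal C * μ Set.univ := by simp [lintegral_const]
    _ < ⊤ := ENNReal.mul_lt_top ENNReal.ofReal_lt_top (measure_lt_top _ _)

lemma aux5_gamma_fin {X : ℕ → Type*} [∀ n, MeasurableSpace (X n)]
    (η0 : Measure (X 0)) [IsProbabilityMeasure η0]
    (M : ∀ n, Kernel (X n) (X (n + 1))) [∀ n, IsMarkovKernel (M n)]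
    (G : ∀ n, X n → ℝ) (hGbdd : ∀ n, ∃ C, ∀ x, G n x ≤ C) (n : ℕ) :
    IsFiniteMeasure (gammaSeq (S := X) η0 (fun k x => M k x) G n) := by
  induction n with
  | zero => show IsFiniteMeasure η0; infer_instance
  | succ n ih =>
    obtain ⟨C, hC⟩ := hGbdd n
    haveI hwd := aux5_wd_fin (gammaSeq (S := X) η0 (fun k x => M k x) G n) hC
    constructor
    show (((gammaSeq (S := X) η0 (fun k x => M k x) G n).withDensity
      (fun x => ENNReal.ofReal (G n x))).bind (fun x => M n x)) Set.univ < ⊤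
    rw [Measure.bind_apply MeasurableSet.univ (M n).measurable.aemeasurable]
    simp only [measure_univ, lintegral_one]
    exact measure_lt_top _ _

lemma aux5_gamma_step {X : ℕ → Type*} [∀ n, MeasurableSpace (X n)]
    (η0 : Measure (X 0)) [IsProbabilityMeasure η0]
    (M : ∀ n, Kernel (X n) (X (n + 1))) [∀ n, IsMarkovKernel (M n)]
    (G : ∀ n, X n → ℝ) (hGmeas : ∀ n, Measurable (G n))
    (hGbdd : ∀ n, ∃ C, ∀ x, G n x ≤ C) (hGpos : ∀ n x, 0 < G n x)
    (n : ℕ) {f : X (n + 1) → ℝ} (hf : Measurable f) {C : ℝ} (hC : ∀ y, |f y| ≤ C) :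
    ∫ y, f y ∂(gammaSeq (S := X) η0 (fun k x => M k x) G (n + 1))
      = ∫ x, G n x * ∫ y, f y ∂(M n x) ∂(gammaSeq (S := X) η0 (fun k x => M k x) G n) := by
  haveI := aux5_gamma_fin η0 M G hGbdd n
  obtain ⟨CG, hCG⟩ := hGbdd n
  haveI := aux5_wd_fin (gammaSeq (S := X) η0 (fun k x => M k x) G n) hCG
  have hunf : gammaSeq (S := X) η0 (fun k x => M k x) G (n + 1)
      = ((gammaSeq (S := X) η0 (fun k x => M k x) G n).withDensity
          (fun x => ENNReal.ofReal (G n x))).bind (fun x => M n x) := rfl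
  rw [hunf, aux5_integral_bind _ (M n) hf hC]
  have hd : (fun x => ENNReal.ofReal (G n x))
      = fun x => (((G n x).toNNReal : ℝ≥0) : ℝ≥0∞) := rfl
  rw [hd, integral_withDensity_eq_integral_smul (hGmeas n).real_toNNReal]
  refine integral_congr_ae (Filter.Eventually.of_forall fun x => ?_)
  simp [NNReal.smul_def, Real.coe_toNNReal _ (le_of_lt (hGpos n x))]

lemma aux5_mixture_prob {α β : Type*} [MeasurableSpace α] [MeasurableSpace β]
    (M : α → Measure β) [∀ a, IsProbabilityMeasure (M a)] {G : α → ℝ}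
    (hGpos : ∀ x, 0 < G x) {N : ℕ} (hN : 1 ≤ N) (x : Fin N → α) :
    IsProbabilityMeasure
      ((∑ k, ENNReal.ofReal (G (x k)))⁻¹ • ∑ j, ENNReal.ofReal (G (x j)) • M (x j)) := by
  have hne : (∑ k, ENNReal.ofReal (G (x k))) ≠ 0 := by
    intro h
    rw [Finset.sum_eq_zero_iff] at h
    have h0 := h ⟨0, by omega⟩ (Finset.mem_univ _)
    rw [ENNReal.ofReal_eq_zero] at h0
    exact absurd h0 (not_le.2 (hGpos _))
  have hnt : (∑ k, ENNReal.ofReal (G (x k))) ≠ ⊤ :=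
    (ENNReal.sum_lt_top.2 fun k _ => ENNReal.ofReal_lt_top).ne
  constructor
  rw [Measure.smul_apply, Measure.finset_sum_apply]
  simp only [Measure.smul_apply, measure_univ, smul_eq_mul, mul_one]
  exact ENNReal.inv_mul_cancel hne hnt

lemma aux5_mixture_integral {α β : Type*} [MeasurableSpace α] [MeasurableSpace β]
    (M : α → Measure β) [∀ a, IsProbabilityMeasure (M a)] {G : α → ℝ}
    (hGpos : ∀ x, 0 < G x) {N : ℕ} (x : Fin N → α)
    {f : β → ℝ} (hf : Measurable f) {C : ℝ} (hC : ∀ y, |f y| ≤ C) :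
    ∫ y, f y ∂((∑ k, ENNReal.ofReal (G (x k)))⁻¹ • ∑ j, ENNReal.ofReal (G (x j)) • M (x j))
      = (∑ k, G (x k))⁻¹ * ∑ j, G (x j) * ∫ y, f y ∂M (x j) := by
  haveI : ∀ j : Fin N, IsFiniteMeasure (ENNReal.ofReal (G (x j)) • M (x j)) := by
    intro j; constructor
    rw [Measure.smul_apply, smul_eq_mul]
    exact ENNReal.mul_lt_top ENNReal.ofReal_lt_top (measure_lt_top _ _)
  rw [integral_smul_measure,
    integral_finset_sum_measure (fun j _ => aux5_integrable _ hf hC)]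
  have h1 : ∀ j : Fin N, ∫ y, f y ∂(ENNReal.ofReal (G (x j)) • M (x j))
      = G (x j) * ∫ y, f y ∂M (x j) := by
    intro j
    rw [integral_smul_measure, smul_eq_mul, ENNReal.toReal_ofReal (hGpos (x j)).le]
  simp_rw [h1]
  have h2 : ((∑ k, ENNReal.ofReal (G (x k)))⁻¹).toReal = (∑ k, G (x k))⁻¹ := by
    rw [ENNReal.toReal_inv, ENNReal.toReal_sum (fun k _ => ENNReal.ofReal_ne_top)]
    congr 1
    exact Finset.sum_congr rfl fun k _ => ENNReal.toReal_ofReal (hGpos (x k)).le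
  rw [h2, smul_eq_mul]

end StatementFiveAux

/-- Unbiasedness of the bootstrap particle estimator of the unnormalized
Feynman-Kac measures: `E[γ_n^{N1}(f)] = γ_n(f)`,
where `γ_n^{N1}(f) = η_n^{N1}(f) ⋅ ∏_{0 ≤ p < n} η_p^{N1}(G_p)`. -/
theorem statement5 {X : ℕ → Type*} [∀ n, MeasurableSpace (X n)]
    (η0 : Measure (X 0)) [IsProbabilityMeasure η0]
    (M : ∀ n, Kernel (X n) (X (n + 1))) [∀ n, IsMarkovKernel (M n)]
    (G : ∀ n, X n → ℝ)
    (hGmeas : ∀ n, Measurable (G n))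
    (hGbdd : ∀ n, ∃ C, ∀ x, G n x ≤ C)
    (hGpos : ∀ n x, 0 < G n x)
    {Ω : Type*} [MeasurableSpace Ω] (P : Measure Ω) [IsProbabilityMeasure P]
    {N1 : ℕ} (hN1 : 1 ≤ N1)
    (ξ : ∀ p, Ω → (Fin N1 → X p))
    (hchain : IsMarkovApprox (S := fun p => Fin N1 → X p) P
      (Measure.pi fun _ : Fin N1 => η0)
      (fun k x => bootStep (fun a => M k a) (G k) x) ξ)
    (n : ℕ) (f : X n → ℝ) (hf : Measurable f) (hfb : ∃ C, ∀ x, |f x| ≤ C) :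
    ∫ ω, ((N1 : ℝ)⁻¹ * ∑ i, f (ξ n ω i)) *
        ∏ p ∈ Finset.range n, ((N1 : ℝ)⁻¹ * ∑ i, G p (ξ p ω i)) ∂P
      = ∫ x, f x ∂(gammaSeq (S := X) η0 (fun k x => M k x) G n) := by
  
  induction n with
  | zero =>
    obtain ⟨Cf, hCf⟩ := hfb
    have hN0 : (N1 : ℝ) ≠ 0 := Nat.cast_ne_zero.2 (by omega)
    simp only [Finset.range_zero, Finset.prod_empty, mul_one]
    have hmeas : Measurable (fun x : Fin N1 → X 0 => (N1 : ℝ)⁻¹ * ∑ i, f (x i)) :=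
      measurable_const.mul (Finset.measurable_sum _ fun i _ => hf.comp (measurable_pi_apply i))
    have h1 : ∫ ω, (N1 : ℝ)⁻¹ * ∑ i, f (ξ 0 ω i) ∂P
        = ∫ x, (N1 : ℝ)⁻¹ * ∑ i, f (x i) ∂(Measure.pi fun _ : Fin N1 => η0) := by
      rw [← hchain.2.1]
      exact (integral_map (hchain.1 0).aemeasurable hmeas.aestronglyMeasurable).symm
    rw [h1, integral_const_mul,
      integral_finset_sum (μ := Measure.pi fun _ : Fin N1 => η0)
        (f := fun (i : Fin N1) (x : Fin N1 → X 0) => f (x i)) _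
        (fun i _ => aux5_integrable _ (hf.comp (measurable_pi_apply i)) (fun x => hCf _)),
      Finset.sum_congr rfl (fun i _ => aux5_integral_eval (fun _ : Fin N1 => η0) i hf),
      Finset.sum_const, Finset.card_univ, Fintype.card_fin, nsmul_eq_mul, ← mul_assoc,
      inv_mul_cancel₀ hN0, one_mul]
    rfl
  | succ n ih =>
    obtain ⟨Cf, hCf⟩ := hfb
    have hN0 : (N1 : ℝ) ≠ 0 := Nat.cast_ne_zero.2 (by omega)
    have hMint_meas : Measurable fun z : X n => ∫ y, f y ∂(M n z) :=
      (MeasureTheory.StronglyMeasurable.integral_kernel_prod_right (κ := M n)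
        (f := fun _ y => f y) ((hf.comp measurable_snd).stronglyMeasurable)).measurable
    have hMint_bdd : ∀ z : X n, |∫ y, f y ∂(M n z)| ≤ |Cf| := by
      intro z
      have h1 : ‖∫ y, f y ∂(M n) z‖ ≤ Cf * (((M n) z) Set.univ).toReal :=
        norm_integral_le_of_norm_le_const
          (Filter.Eventually.of_forall fun y => by simpa [Real.norm_eq_abs] using hCf y)
      rw [Real.norm_eq_abs] at h1
      simpa [measure_univ] using h1.trans (by simp [le_abs_self])
    obtain ⟨CG, hCG⟩ := hGbdd n
    have hgmeas : Measurable fun z : X n => G n z * ∫ y, f y ∂(M n z) :=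
      (hGmeas n).mul hMint_meas
    have hgbdd : ∀ z : X n, |G n z * ∫ y, f y ∂(M n z)| ≤ |CG| * |Cf| := by
      intro z
      rw [abs_mul]
      refine mul_le_mul ?_ (hMint_bdd z) (abs_nonneg _) (abs_nonneg _)
      rw [abs_of_pos (hGpos n z)]
      exact (hCG z).trans (le_abs_self CG)
    have hFmeas : ∀ p, Measurable (fun x : Fin N1 → X p => (N1 : ℝ)⁻¹ * ∑ i, G p (x i)) :=
      fun p => measurable_const.mul
        (Finset.measurable_sum _ fun i _ => (hGmeas p).comp (measurable_pi_apply i))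
    have hFbdd : ∀ p, ∃ C, ∀ x : Fin N1 → X p, |(N1 : ℝ)⁻¹ * ∑ i, G p (x i)| ≤ C := by
      intro p
      obtain ⟨C, hC⟩ := hGbdd p
      refine ⟨C, fun x => ?_⟩
      have hnn : (0:ℝ) ≤ (N1 : ℝ)⁻¹ * ∑ i, G p (x i) :=
        mul_nonneg (by positivity) (Finset.sum_nonneg fun i _ => (hGpos p _).le)
      rw [abs_of_nonneg hnn]
      have hsum : ∑ i, G p (x i) ≤ (N1 : ℝ) * C := by
        calc ∑ i, G p (x i) ≤ ∑ _i : Fin N1, C := Finset.sum_le_sum fun i _ => hC _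
          _ = (N1 : ℝ) * C := by
              rw [Finset.sum_const, Finset.card_univ, Fintype.card_fin, nsmul_eq_mul]
      calc (N1 : ℝ)⁻¹ * ∑ i, G p (x i) ≤ (N1 : ℝ)⁻¹ * ((N1 : ℝ) * C) :=
            mul_le_mul_of_nonneg_left hsum (by positivity)
        _ = C := by rw [← mul_assoc, inv_mul_cancel₀ hN0, one_mul]
    have hHmeas : Measurable (fun y : Fin N1 → X (n+1) => (N1 : ℝ)⁻¹ * ∑ i, f (y i)) :=
      measurable_const.mul (Finset.measurable_sum _ fun i _ => hf.comp (measurable_pi_apply i))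
    have hHbdd : ∀ y : Fin N1 → X (n+1), |(N1 : ℝ)⁻¹ * ∑ i, f (y i)| ≤ |Cf| := by
      intro y
      calc |(N1 : ℝ)⁻¹ * ∑ i, f (y i)| ≤ (N1 : ℝ)⁻¹ * ∑ i, |f (y i)| := by
            rw [abs_mul, abs_of_nonneg (inv_nonneg.2 (Nat.cast_nonneg N1) : (0:ℝ) ≤ (N1:ℝ)⁻¹)]
            exact mul_le_mul_of_nonneg_left (Finset.abs_sum_le_sum_abs _ _) (by positivity)
        _ ≤ (N1 : ℝ)⁻¹ * ((N1 : ℝ) * |Cf|) := by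
            refine mul_le_mul_of_nonneg_left ?_ (by positivity)
            calc ∑ i, |f (y i)| ≤ ∑ _i : Fin N1, |Cf| :=
                  Finset.sum_le_sum fun i _ => (hCf _).trans (le_abs_self Cf)
              _ = (N1 : ℝ) * |Cf| := by
                  rw [Finset.sum_const, Finset.card_univ, Fintype.card_fin, nsmul_eq_mul]
        _ = |Cf| := by rw [← mul_assoc, inv_mul_cancel₀ hN0, one_mul]
    have hmk := hchain.2.2 n (fun p x => (N1 : ℝ)⁻¹ * ∑ i, G p (x i)) hFmeas hFbdd
      (fun y => (N1 : ℝ)⁻¹ * ∑ i, f (y i)) hHmeas ⟨|Cf|, hHbdd⟩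
    simp only [] at hmk
    have hboot : ∀ x : Fin N1 → X n,
        ∫ y, (N1 : ℝ)⁻¹ * ∑ i, f (y i) ∂(bootStep (fun a => (M n) a) (G n) x)
          = (∑ k, G n (x k))⁻¹ * ∑ j, G n (x j) * ∫ y, f y ∂(M n (x j)) := by
      intro x
      haveI := aux5_mixture_prob (fun a => ((M n) a : Measure (X (n+1)))) (hGpos n) hN1 x
      have hunf : bootStep (fun a => ((M n) a : Measure (X (n+1)))) (G n) x
          = Measure.pi (fun _ : Fin N1 =>
            (∑ k, ENNReal.ofReal (G n (x k)))⁻¹ •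
              ∑ j, ENNReal.ofReal (G n (x j)) • ((M n) (x j) : Measure (X (n+1)))) := rfl
      rw [hunf, integral_const_mul,
        integral_finset_sum
          (f := fun (i : Fin N1) (y : Fin N1 → X (n+1)) => f (y i)) _
          (fun i _ => aux5_integrable _ (hf.comp (measurable_pi_apply i)) (fun y => hCf _)),
        Finset.sum_congr rfl (fun i _ => aux5_integral_eval
          (fun _ : Fin N1 => (∑ k, ENNReal.ofReal (G n (x k)))⁻¹ •
            ∑ j, ENNReal.ofReal (G n (x j)) • ((M n) (x j) : Measure (X (n+1)))) i hf),
        Finset.sum_const, Finset.card_univ, Fintype.card_fin, nsmul_eq_mul, ← mul_assoc,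
        inv_mul_cancel₀ hN0, one_mul]
      exact aux5_mixture_integral _ (hGpos n) x hf hCf
    have hgoalL : ∫ ω, ((N1 : ℝ)⁻¹ * ∑ i, f (ξ (n+1) ω i)) *
        ∏ p ∈ Finset.range (n+1), ((N1 : ℝ)⁻¹ * ∑ i, G p (ξ p ω i)) ∂P
      = ∫ ω, (∏ p ∈ Finset.range (n+1), ((N1 : ℝ)⁻¹ * ∑ i, G p (ξ p ω i))) *
          ((N1 : ℝ)⁻¹ * ∑ i, f (ξ (n+1) ω i)) ∂P := by
      refine integral_congr_ae (Filter.Eventually.of_forall fun ω => ?_)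
      ring
    rw [hgoalL, hmk]
    have hstep2 : ∫ ω, (∏ p ∈ Finset.range (n+1), ((N1 : ℝ)⁻¹ * ∑ i, G p (ξ p ω i))) *
        (∫ y, (N1 : ℝ)⁻¹ * ∑ i, f (y i) ∂(bootStep (fun a => (M n) a) (G n) (ξ n ω))) ∂P
      = ∫ ω, ((N1 : ℝ)⁻¹ * ∑ i, G n (ξ n ω i) * ∫ y, f y ∂(M n (ξ n ω i))) *
          ∏ p ∈ Finset.range n, ((N1 : ℝ)⁻¹ * ∑ i, G p (ξ p ω i)) ∂P := by
      refine integral_congr_ae (Filter.Eventually.of_forall fun ω => ?_)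
      dsimp only
      rw [hboot (ξ n ω), Finset.prod_range_succ]
      have hpos : (0:ℝ) < ∑ k, G n (ξ n ω k) := by
        haveI : NeZero N1 := ⟨by omega⟩
        exact Finset.sum_pos (fun k _ => hGpos n _) Finset.univ_nonempty
      field_simp
    rw [hstep2]
    have hihg := ih (fun z => G n z * ∫ y, f y ∂(M n z)) hgmeas ⟨|CG| * |Cf|, hgbdd⟩
    rw [hihg]
    exact (aux5_gamma_step η0 M G hGmeas hGbdd hGpos n hf hCf).symm
end
end

section
/- (Theorem 2.1) Consider the island Feynman-Kac model on the product spaces X_n^{N1} with transitions boldM_{n+1}, potentials boldG_n(x) = N1^{-1} Σ_{i=1}^{N1} G_n(x^i), and initial distribution η_0^{⊗N1}: its unnormalized measures are boldΓ_n(F) = E[F(ξ_n) ∏_{0≤p<n} boldG_p(ξ_p)] and boldη_n = boldΓ_n / boldΓ_n(1). Then for any bounded measurable f on X_n and the lifted function F(x) = N1^{-1} Σ_{i=1}^{N1} f(x^i), one has boldΓ_n(F) = γ_n(f) and boldη_n(F) = η_n(f), where γ_n and η_n are the unnormalized and normalized Feynman-Kac measures of the original model. -/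
open MeasureTheory ProbabilityTheory Filter Finset
open scoped ENNReal NNReal Topology Classical

noncomputable section

section AuxFK
namespace FKaux

variable {α : Type*} [MeasurableSpace α] {β : Type*} [MeasurableSpace β]

lemma integrable_of_bdd {μ : Measure α} [IsFiniteMeasure μ] {f : α → ℝ} (hf : Measurable f)
    {C : ℝ} (hC : ∀ x, |f x| ≤ C) : Integrable f μ :=
  (integrable_const C).mono' hf.aestronglyMeasurable
    (Filter.Eventually.of_forall fun x => by simpa [Real.norm_eq_abs] using hC x)

lemma meas_integral_kernel (M : Kernel α β) [IsSFiniteKernel M] {f : β → ℝ} (hf : Measurable f) :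
    Measurable fun x => ∫ y, f y ∂(M x) := by
  have h : StronglyMeasurable fun x => ∫ y, (fun p : α × β => f p.2) (x, y) ∂(M x) :=
    (hf.comp measurable_snd).stronglyMeasurable.integral_kernel_prod_right'
  exact h.measurable

lemma abs_integral_le (μ : Measure β) [IsProbabilityMeasure μ] {f : β → ℝ} (hf : Measurable f)
    {C : ℝ} (hC : ∀ x, |f x| ≤ C) : |∫ y, f y ∂μ| ≤ C := by
  calc |∫ y, f y ∂μ| ≤ ∫ y, |f y| ∂μ := by
        simpa [Real.norm_eq_abs] using norm_integral_le_integral_norm (μ := μ) f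
    _ ≤ ∫ _, C ∂μ := integral_mono (integrable_of_bdd hf hC).abs (integrable_const C)
        (fun x => hC x)
    _ = C := by simp

lemma pi_map_eval {ι : Type*} [Fintype ι] {X : ι → Type*} [∀ i, MeasurableSpace (X i)]
    (μ : ∀ i, Measure (X i)) [∀ i, IsProbabilityMeasure (μ i)] (i : ι) :
    (Measure.pi μ).map (Function.eval i) = μ i := by
  ext s hs
  rw [Measure.map_apply (measurable_pi_apply i) hs]
  have h1 : Function.eval i ⁻¹' s
      = Set.pi Set.univ (Function.update (fun j => (Set.univ : Set (X j))) i s) :=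
    Set.eval_preimage
  rw [h1, Measure.pi_pi]
  rw [Finset.prod_eq_single i (fun j _ hj => by simp [Function.update_of_ne hj]) (by simp)]
  simp

lemma integral_pi_eval {ι : Type*} [Fintype ι] {X : ι → Type*} [∀ i, MeasurableSpace (X i)]
    (μ : ∀ i, Measure (X i)) [∀ i, IsProbabilityMeasure (μ i)] (i : ι) {f : X i → ℝ}
    (hf : Measurable f) :
    ∫ y, f (y i) ∂(Measure.pi μ) = ∫ x, f x ∂(μ i) := by
  rw [← pi_map_eval μ i,
    integral_map (measurable_pi_apply i).aemeasurable hf.aestronglyMeasurable]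

end FKaux

namespace FKaux
variable {α : Type*} [MeasurableSpace α] {β : Type*} [MeasurableSpace β]

lemma isFiniteMeasure_bind (μ : Measure α) [IsFiniteMeasure μ] (κ : Kernel α β)
    [IsMarkovKernel κ] : IsFiniteMeasure (μ.bind fun a => κ a) := by
  constructor
  rw [Measure.bind_apply MeasurableSet.univ κ.measurable.aemeasurable]
  simp [measure_lt_top]

lemma my_integral_bind (μ : Measure α) [IsFiniteMeasure μ] (κ : Kernel α β)
    [IsMarkovKernel κ] {f : β → ℝ} (hf : Measurable f) {C : ℝ} (hC : ∀ y, |f y| ≤ C) :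
    ∫ y, f y ∂(μ.bind fun a => κ a) = ∫ a, ∫ y, f y ∂(κ a) ∂μ := by
  haveI := isFiniteMeasure_bind μ κ
  set C' : ℝ := max C 0 with hC'def
  have hC' : ∀ y, |f y| ≤ C' := fun y => le_trans (hC y) (le_max_left _ _)
  have hC'0 : (0 : ℝ) ≤ C' := le_max_right _ _
  have hint : Integrable f (μ.bind fun a => κ a) := integrable_of_bdd hf hC'
  have hinta : ∀ a, Integrable f (κ a) := fun a => integrable_of_bdd hf hC'
  -- measurable lintegral parts
  have hmp : Measurable fun a => ∫⁻ y, ENNReal.ofReal (f y) ∂(κ a) :=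
    Measurable.lintegral_kernel (hf.ennreal_ofReal)
  have hmn : Measurable fun a => ∫⁻ y, ENNReal.ofReal (-f y) ∂(κ a) :=
    Measurable.lintegral_kernel (hf.neg.ennreal_ofReal)
  have hbp : ∀ a, (∫⁻ y, ENNReal.ofReal (f y) ∂(κ a)) ≤ ENNReal.ofReal C' := by
    intro a
    refine le_trans (lintegral_mono fun y => ENNReal.ofReal_le_ofReal
      (le_trans (le_abs_self _) (hC' y))) ?_
    simp
  have hbn : ∀ a, (∫⁻ y, ENNReal.ofReal (-f y) ∂(κ a)) ≤ ENNReal.ofReal C' := by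
    intro a
    refine le_trans (lintegral_mono fun y => ENNReal.ofReal_le_ofReal
      (le_trans (neg_le_abs _) (hC' y))) ?_
    simp
  rw [integral_eq_lintegral_pos_part_sub_lintegral_neg_part hint,
    Measure.lintegral_bind κ.measurable.aemeasurable hf.ennreal_ofReal.aemeasurable,
    Measure.lintegral_bind (f := fun y => ENNReal.ofReal (-f y)) κ.measurable.aemeasurable
      hf.neg.ennreal_ofReal.aemeasurable]
  have hrw : ∀ a, ∫ y, f y ∂(κ a)
      = (∫⁻ y, ENNReal.ofReal (f y) ∂(κ a)).toReal
        - (∫⁻ y, ENNReal.ofReal (-f y) ∂(κ a)).toReal := fun a =>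
    integral_eq_lintegral_pos_part_sub_lintegral_neg_part (hinta a)
  rw [integral_congr_ae (Filter.Eventually.of_forall hrw)]
  have hip : Integrable (fun a => (∫⁻ y, ENNReal.ofReal (f y) ∂(κ a)).toReal) μ := by
    refine integrable_of_bdd (hmp.ennreal_toReal) (C := C') fun a => ?_
    rw [abs_of_nonneg ENNReal.toReal_nonneg]
    exact ENNReal.toReal_le_of_le_ofReal hC'0 (hbp a)
  have hin : Integrable (fun a => (∫⁻ y, ENNReal.ofReal (-f y) ∂(κ a)).toReal) μ := by
    refine integrable_of_bdd (hmn.ennreal_toReal) (C := C') fun a => ?_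
    rw [abs_of_nonneg ENNReal.toReal_nonneg]
    exact ENNReal.toReal_le_of_le_ofReal hC'0 (hbn a)
  rw [integral_sub hip hin,
    integral_toReal hmp.aemeasurable (Filter.Eventually.of_forall fun a =>
      lt_of_le_of_lt (hbp a) ENNReal.ofReal_lt_top),
    integral_toReal hmn.aemeasurable (Filter.Eventually.of_forall fun a =>
      lt_of_le_of_lt (hbn a) ENNReal.ofReal_lt_top)]

end FKaux

namespace FKaux
variable {α : Type*} [MeasurableSpace α] {β : Type*} [MeasurableSpace β]

def bootStep' (M : α → Measure β) (G : α → ℝ) {N : ℕ} (x : Fin N → α) :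
    Measure (Fin N → β) :=
  Measure.pi fun _ : Fin N =>
    (∑ k, ENNReal.ofReal (G (x k)))⁻¹ • ∑ j, ENNReal.ofReal (G (x j)) • M (x j)

lemma mixture_prob (M : α → Measure β) [∀ a, IsProbabilityMeasure (M a)]
    (G : α → ℝ) (hGpos : ∀ a, 0 < G a) {N : ℕ} (hN : 1 ≤ N) (x : Fin N → α) :
    IsProbabilityMeasure
      ((∑ k, ENNReal.ofReal (G (x k)))⁻¹ • ∑ j, ENNReal.ofReal (G (x j)) • M (x j)) := by
  haveI : NeZero N := ⟨Nat.one_le_iff_ne_zero.mp hN⟩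
  constructor
  have hsum : ((∑ j, ENNReal.ofReal (G (x j)) • M (x j)) : Measure β) Set.univ
      = ∑ k, ENNReal.ofReal (G (x k)) := by
    simp [Measure.finset_sum_apply, measure_univ]
  have hne0 : (∑ k, ENNReal.ofReal (G (x k))) ≠ 0 := by
    intro h
    rw [Finset.sum_eq_zero_iff] at h
    exact (ENNReal.ofReal_pos.mpr (hGpos _)).ne' (h 0 (Finset.mem_univ 0))
  have hnetop : (∑ k, ENNReal.ofReal (G (x k))) ≠ ⊤ := by
    exact (ENNReal.sum_lt_top.2 fun _ _ => ENNReal.ofReal_lt_top).ne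
  simp only [Measure.smul_apply, smul_eq_mul, hsum]
  exact ENNReal.inv_mul_cancel hne0 hnetop

lemma integral_mixture (M : α → Measure β) [∀ a, IsProbabilityMeasure (M a)]
    (G : α → ℝ) (hGpos : ∀ a, 0 < G a) {N : ℕ} (hN : 1 ≤ N) (x : Fin N → α)
    {f : β → ℝ} (hf : Measurable f) {C : ℝ} (hC : ∀ y, |f y| ≤ C) :
    ∫ y, f y ∂((∑ k, ENNReal.ofReal (G (x k)))⁻¹ • ∑ j, ENNReal.ofReal (G (x j)) • M (x j))
      = (∑ k, G (x k))⁻¹ * ∑ j, G (x j) * ∫ y, f y ∂(M (x j)) := by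
  rw [integral_smul_measure, integral_finset_sum_measure (fun j _ =>
    (integrable_of_bdd hf hC).smul_measure ENNReal.ofReal_ne_top)]
  have h1 : ∀ j, ∫ y, f y ∂(ENNReal.ofReal (G (x j)) • M (x j))
      = G (x j) * ∫ y, f y ∂(M (x j)) := by
    intro j
    rw [integral_smul_measure, ENNReal.toReal_ofReal (hGpos _).le, smul_eq_mul]
  rw [Finset.sum_congr rfl fun j _ => h1 j]
  congr 1
  rw [ENNReal.toReal_inv, ENNReal.toReal_sum (fun k _ => ENNReal.ofReal_ne_top)]
  congr 1
  exact Finset.sum_congr rfl fun k _ => ENNReal.toReal_ofReal (hGpos _).le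

lemma integral_bootStep' (M : α → Measure β) [∀ a, IsProbabilityMeasure (M a)]
    (G : α → ℝ) (hGpos : ∀ a, 0 < G a) {N : ℕ} (hN : 1 ≤ N) (x : Fin N → α)
    {f : β → ℝ} (hf : Measurable f) {C : ℝ} (hC : ∀ y, |f y| ≤ C) :
    ∫ y, (N : ℝ)⁻¹ * ∑ i, f (y i) ∂(bootStep' M G x)
      = (∑ k, G (x k))⁻¹ * ∑ j, G (x j) * ∫ y, f y ∂(M (x j)) := by
  haveI := mixture_prob M G hGpos hN x
  have hNne : (N : ℝ) ≠ 0 := Nat.cast_ne_zero.mpr (Nat.one_le_iff_ne_zero.mp hN)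
  rw [bootStep', integral_const_mul,
    integral_finset_sum _ (fun i _ => integrable_of_bdd (f := fun a : Fin N → β => f (a i))
      (hf.comp (measurable_pi_apply i)) (fun a : Fin N → β => hC (a i)))]
  rw [Finset.sum_congr rfl fun i _ => integral_pi_eval _ i hf]
  rw [Finset.sum_const, Finset.card_univ, Fintype.card_fin, nsmul_eq_mul]
  rw [← mul_assoc, inv_mul_cancel₀ hNne, one_mul]
  exact integral_mixture M G hGpos hN x hf hC

end FKaux

namespace FKaux
open FKisland

lemma bootStep_eq {α : Type*} [MeasurableSpace α] {β : Type*} [MeasurableSpace β]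
    (M : α → Measure β) (G : α → ℝ) {N : ℕ} (x : Fin N → α) :
    FKisland.bootStep M G x = bootStep' M G x := rfl

variable {X : ℕ → Type*} [∀ n, MeasurableSpace (X n)]
  (η0 : Measure (X 0)) [IsProbabilityMeasure η0]
  (M : ∀ n, Kernel (X n) (X (n + 1))) [∀ n, IsMarkovKernel (M n)]
  (G : ∀ n, X n → ℝ)

lemma withDensity_G_finite {α : Type*} [MeasurableSpace α] (μ : Measure α) [IsFiniteMeasure μ] {g : α → ℝ}
    {C : ℝ} (hC : ∀ x, g x ≤ C) :
    IsFiniteMeasure (μ.withDensity fun x => ENNReal.ofReal (g x)) := by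
  constructor
  rw [MeasureTheory.withDensity_apply _ MeasurableSet.univ, setLIntegral_univ]
  refine lt_of_le_of_lt (lintegral_mono fun x => ENNReal.ofReal_le_ofReal (hC x)) ?_
  rw [lintegral_const]
  exact ENNReal.mul_lt_top ENNReal.ofReal_lt_top (measure_lt_top _ _)

lemma gamma_finite (hGbdd : ∀ n, ∃ C, ∀ x, G n x ≤ C) (n : ℕ) :
    IsFiniteMeasure (gammaSeq (S := X) η0 (fun k x => M k x) G n) := by
  induction n with
  | zero => show IsFiniteMeasure η0; infer_instance
  | succ n ih =>
    obtain ⟨C, hC⟩ := hGbdd n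
    haveI := ih
    haveI := withDensity_G_finite (μ := gammaSeq (S := X) η0 (fun k x => M k x) G n) hC
    constructor
    show ((gammaSeq (S := X) η0 (fun k x => M k x) G n).withDensity
        (fun x => ENNReal.ofReal (G n x))).bind (fun x => M n x) Set.univ < ⊤
    rw [Measure.bind_apply MeasurableSet.univ (M n).measurable.aemeasurable]
    simp only [measure_univ, lintegral_one]
    exact measure_lt_top _ _

lemma gamma_step (hGmeas : ∀ n, Measurable (G n)) (hGbdd : ∀ n, ∃ C, ∀ x, G n x ≤ C)
    (hGpos : ∀ n x, 0 < G n x) (n : ℕ)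
    {f : X (n + 1) → ℝ} (hf : Measurable f) {C : ℝ} (hC : ∀ x, |f x| ≤ C) :
    ∫ x, f x ∂(gammaSeq (S := X) η0 (fun k x => M k x) G (n + 1))
      = ∫ x, G n x * ∫ y, f y ∂(M n x)
          ∂(gammaSeq (S := X) η0 (fun k x => M k x) G n) := by
  haveI := gamma_finite η0 M G hGbdd n
  obtain ⟨Cg, hCg⟩ := hGbdd n
  haveI := withDensity_G_finite
    (μ := gammaSeq (S := X) η0 (fun k x => M k x) G n) hCg
  have h1 : gammaSeq (S := X) η0 (fun k x => M k x) G (n + 1)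
      = ((gammaSeq (S := X) η0 (fun k x => M k x) G n).withDensity
          (fun x => ENNReal.ofReal (G n x))).bind (fun x => M n x) := rfl
  rw [h1, my_integral_bind _ (M n) hf hC]
  have h2 : (fun x : X n => ENNReal.ofReal (G n x))
      = fun x => (((G n x).toNNReal : ℝ≥0) : ℝ≥0∞) := rfl
  rw [h2, integral_withDensity_eq_integral_smul (hGmeas n).real_toNNReal]
  refine integral_congr_ae (Filter.Eventually.of_forall fun x => ?_)
  simp [NNReal.smul_def, Real.coe_toNNReal _ (hGpos n x).le]

end FKaux

end AuxFK

open FKisland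
/-- **Theorem 2.1.** For the island Feynman-Kac model built from the
bootstrap particle transitions `boldM` and potentials `boldG_n(x) = N1⁻¹ Σ_i G_n(x^i)`,
with initial law `η_0^{⊗N1}`, and for the lifted function
`F(x) = N1⁻¹ Σ_i f(x^i)`: `boldΓ_n(F) = γ_n(f)` and `boldη_n(F) = η_n(f)`. -/
theorem statement6 {X : ℕ → Type*} [∀ n, MeasurableSpace (X n)]
    (η0 : Measure (X 0)) [IsProbabilityMeasure η0]
    (M : ∀ n, Kernel (X n) (X (n + 1))) [∀ n, IsMarkovKernel (M n)]
    (G : ∀ n, X n → ℝ)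
    (hGmeas : ∀ n, Measurable (G n))
    (hGbdd : ∀ n, ∃ C, ∀ x, G n x ≤ C)
    (hGpos : ∀ n x, 0 < G n x)
    {Ω : Type*} [MeasurableSpace Ω] (P : Measure Ω) [IsProbabilityMeasure P]
    {N1 : ℕ} (hN1 : 1 ≤ N1)
    (ξ : ∀ p, Ω → (Fin N1 → X p))
    (hchain : IsMarkovApprox (S := fun p => Fin N1 → X p) P
      (Measure.pi fun _ : Fin N1 => η0)
      (fun k x => bootStep (fun a => M k a) (G k) x) ξ)
    (n : ℕ) (f : X n → ℝ) (hf : Measurable f) (hfb : ∃ C, ∀ x, |f x| ≤ C) :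
    (∫ ω, ((N1 : ℝ)⁻¹ * ∑ i, f (ξ n ω i)) *
        ∏ p ∈ Finset.range n, ((N1 : ℝ)⁻¹ * ∑ i, G p (ξ p ω i)) ∂P
      = ∫ x, f x ∂(gammaSeq (S := X) η0 (fun k x => M k x) G n))
    ∧ (∫ ω, ((N1 : ℝ)⁻¹ * ∑ i, f (ξ n ω i)) *
          ∏ p ∈ Finset.range n, ((N1 : ℝ)⁻¹ * ∑ i, G p (ξ p ω i)) ∂P) /
        (∫ ω, ∏ p ∈ Finset.range n, ((N1 : ℝ)⁻¹ * ∑ i, G p (ξ p ω i)) ∂P)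

      = ∫ x, f x ∂(etaSeq (S := X) η0 (fun k x => M k x) G n) := by
  classical
  haveI : NeZero N1 := ⟨Nat.one_le_iff_ne_zero.mp hN1⟩
  have hNne : (N1 : ℝ) ≠ 0 := Nat.cast_ne_zero.mpr (Nat.one_le_iff_ne_zero.mp hN1)
  obtain ⟨Cf, hCf⟩ := hfb
  -- key unbiasedness identity, by induction
  have key : ∀ (m : ℕ) (h : X m → ℝ), Measurable h → ∀ C : ℝ, (∀ x, |h x| ≤ C) →
      ∫ ω, ((N1 : ℝ)⁻¹ * ∑ i, h (ξ m ω i)) *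
          ∏ p ∈ Finset.range m, ((N1 : ℝ)⁻¹ * ∑ i, G p (ξ p ω i)) ∂P
        = ∫ x, h x ∂(gammaSeq (S := X) η0 (fun k x => M k x) G m) := by
    intro m
    induction m with
    | zero =>
      intro h hh C hB
      simp only [Finset.range_zero, Finset.prod_empty, mul_one]
      have hH : Measurable fun x : Fin N1 → X 0 => (N1 : ℝ)⁻¹ * ∑ i, h (x i) :=
        measurable_const.mul
          (Finset.measurable_sum _ fun i _ => hh.comp (measurable_pi_apply i))
      have hmap : ∫ ω, (N1 : ℝ)⁻¹ * ∑ i, h (ξ 0 ω i) ∂P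
          = ∫ x, (N1 : ℝ)⁻¹ * ∑ i, h (x i) ∂(P.map (ξ 0)) :=
        (integral_map (hchain.1 0).aemeasurable hH.aestronglyMeasurable).symm
      rw [hmap, hchain.2.1, integral_const_mul,
        integral_finset_sum _ (fun i _ => FKaux.integrable_of_bdd
          (f := fun x : Fin N1 → X 0 => h (x i))
          (hh.comp (measurable_pi_apply i)) (fun x => hB (x i))),
        Finset.sum_congr rfl fun i _ => FKaux.integral_pi_eval (fun _ => η0) i hh,
        Finset.sum_const, Finset.card_univ, Fintype.card_fin, nsmul_eq_mul,
        ← mul_assoc, inv_mul_cancel₀ hNne, one_mul]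
      rfl
    | succ m ih =>
      intro h hh C hB
      haveI : ∀ a : X m, IsProbabilityMeasure ((fun a => M m a) a) := fun a =>
        inferInstance
      obtain ⟨Cg, hCg⟩ := hGbdd m
      set g : X m → ℝ := fun x => G m x * ∫ y, h y ∂(M m x) with hgdef
      have hgmeas : Measurable g := (hGmeas m).mul (FKaux.meas_integral_kernel (M m) hh)
      have hgbdd : ∀ x, |g x| ≤ max Cg 0 * max C 0 := by
        intro x
        rw [hgdef, abs_mul]
        refine mul_le_mul ?_ (FKaux.abs_integral_le _ hh
          (fun y => le_trans (hB y) (le_max_left _ _))) (abs_nonneg _) (le_max_right _ _)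
        rw [abs_of_pos (hGpos m x)]
        exact le_trans (hCg x) (le_max_left _ _)
      -- the functionals for the Markov property
      have hFmeas : ∀ p, Measurable fun x : Fin N1 → X p =>
          (N1 : ℝ)⁻¹ * ∑ i, G p (x i) := fun p =>
        measurable_const.mul
          (Finset.measurable_sum _ fun i _ => (hGmeas p).comp (measurable_pi_apply i))
      have hFbdd : ∀ p, ∃ C, ∀ x : Fin N1 → X p, |(N1 : ℝ)⁻¹ * ∑ i, G p (x i)| ≤ C := by
        intro p
        obtain ⟨Cp, hCp⟩ := hGbdd p
        refine ⟨max Cp 0, fun x => ?_⟩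
        rw [abs_mul, abs_of_nonneg (inv_nonneg.mpr (Nat.cast_nonneg N1))]
        have h1 : |∑ i, G p (x i)| ≤ (N1 : ℝ) * max Cp 0 := by
          have hstep : (∑ i, |G p (x i)|) ≤ ∑ _i : Fin N1, max Cp 0 :=
            Finset.sum_le_sum fun i _ => le_trans (le_of_eq (abs_of_pos (hGpos p (x i))))
              (le_trans (hCp (x i)) (le_max_left _ _))
          refine le_trans (Finset.abs_sum_le_sum_abs _ _) (le_trans hstep ?_)
          rw [Finset.sum_const, Finset.card_univ, Fintype.card_fin, nsmul_eq_mul]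
        calc (N1 : ℝ)⁻¹ * |∑ i, G p (x i)| ≤ (N1 : ℝ)⁻¹ * ((N1 : ℝ) * max Cp 0) := by
              exact mul_le_mul_of_nonneg_left h1 (inv_nonneg.mpr (Nat.cast_nonneg N1))
          _ = max Cp 0 := by rw [← mul_assoc, inv_mul_cancel₀ hNne, one_mul]
      have hHmeas : Measurable fun x : Fin N1 → X (m + 1) =>
          (N1 : ℝ)⁻¹ * ∑ i, h (x i) :=
        measurable_const.mul
          (Finset.measurable_sum _ fun i _ => hh.comp (measurable_pi_apply i))
      have hHbdd : ∃ C, ∀ x : Fin N1 → X (m + 1),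
          |(N1 : ℝ)⁻¹ * ∑ i, h (x i)| ≤ C := by
        refine ⟨max C 0, fun x => ?_⟩
        rw [abs_mul, abs_of_nonneg (inv_nonneg.mpr (Nat.cast_nonneg N1))]
        have h1 : |∑ i, h (x i)| ≤ (N1 : ℝ) * max C 0 := by
          have hstep : (∑ i, |h (x i)|) ≤ ∑ _i : Fin N1, max C 0 :=
            Finset.sum_le_sum fun i _ => le_trans (hB (x i)) (le_max_left _ _)
          refine le_trans (Finset.abs_sum_le_sum_abs _ _) (le_trans hstep ?_)
          rw [Finset.sum_const, Finset.card_univ, Fintype.card_fin, nsmul_eq_mul]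
        calc (N1 : ℝ)⁻¹ * |∑ i, h (x i)| ≤ (N1 : ℝ)⁻¹ * ((N1 : ℝ) * max C 0) :=
              mul_le_mul_of_nonneg_left h1 (inv_nonneg.mpr (Nat.cast_nonneg N1))
          _ = max C 0 := by rw [← mul_assoc, inv_mul_cancel₀ hNne, one_mul]
      have hmk := hchain.2.2 m (fun p x => (N1 : ℝ)⁻¹ * ∑ i, G p (x i)) hFmeas hFbdd
        (fun x => (N1 : ℝ)⁻¹ * ∑ i, h (x i)) hHmeas hHbdd
      calc ∫ ω, ((N1 : ℝ)⁻¹ * ∑ i, h (ξ (m + 1) ω i)) *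
              ∏ p ∈ Finset.range (m + 1), ((N1 : ℝ)⁻¹ * ∑ i, G p (ξ p ω i)) ∂P
          = ∫ ω, (∏ p ∈ Finset.range (m + 1), ((N1 : ℝ)⁻¹ * ∑ i, G p (ξ p ω i))) *
              ((N1 : ℝ)⁻¹ * ∑ i, h (ξ (m + 1) ω i)) ∂P := by
            refine integral_congr_ae (Filter.Eventually.of_forall fun ω => ?_)
            exact mul_comm _ _
        _ = ∫ ω, (∏ p ∈ Finset.range (m + 1), ((N1 : ℝ)⁻¹ * ∑ i, G p (ξ p ω i))) *
              ∫ y, (N1 : ℝ)⁻¹ * ∑ i, h (y i)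
                ∂(bootStep (fun a => M m a) (G m) (ξ m ω)) ∂P := hmk
        _ = ∫ ω, ((N1 : ℝ)⁻¹ * ∑ i, g (ξ m ω i)) *
              ∏ p ∈ Finset.range m, ((N1 : ℝ)⁻¹ * ∑ i, G p (ξ p ω i)) ∂P := by
            refine integral_congr_ae (Filter.Eventually.of_forall fun ω => ?_)
            beta_reduce
            rw [FKaux.bootStep_eq, FKaux.integral_bootStep' (fun a => M m a) (G m)
              (hGpos m) hN1 (ξ m ω) hh hB, Finset.prod_range_succ]
            have hS : (0 : ℝ) < ∑ k, G m (ξ m ω k) :=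
              Finset.sum_pos (fun k _ => hGpos m _) Finset.univ_nonempty
            have hg' : ∀ j, G m (ξ m ω j) * ∫ y, h y ∂(M m (ξ m ω j)) = g (ξ m ω j) :=
              fun j => rfl
            simp only [hg']
            field_simp
        _ = ∫ x, g x ∂(gammaSeq (S := X) η0 (fun k x => M k x) G m) :=
            ih g hgmeas _ hgbdd
        _ = ∫ x, h x ∂(gammaSeq (S := X) η0 (fun k x => M k x) G (m + 1)) :=
            (FKaux.gamma_step η0 M G hGmeas hGbdd hGpos m hh hB).symm
  have h1 := key n f hf Cf hCf
  haveI := FKaux.gamma_finite η0 M G hGbdd n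
  have hone := key n (fun _ => (1 : ℝ)) measurable_const 1 (fun x => by simp)
  have h2 : ∫ ω, ∏ p ∈ Finset.range n, ((N1 : ℝ)⁻¹ * ∑ i, G p (ξ p ω i)) ∂P
      = (gammaSeq (S := X) η0 (fun k x => M k x) G n Set.univ).toReal := by
    have hc : ∀ ω, ((N1 : ℝ)⁻¹ * ∑ _i : Fin N1, (1 : ℝ)) *
        ∏ p ∈ Finset.range n, ((N1 : ℝ)⁻¹ * ∑ i, G p (ξ p ω i))
          = ∏ p ∈ Finset.range n, ((N1 : ℝ)⁻¹ * ∑ i, G p (ξ p ω i)) := by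
      intro ω
      rw [Finset.sum_const, Finset.card_univ, Fintype.card_fin, nsmul_eq_mul, mul_one,
        inv_mul_cancel₀ hNne, one_mul]
    rw [← integral_congr_ae (Filter.Eventually.of_forall hc), hone, integral_const,
      smul_eq_mul, mul_one]
    rfl
  refine ⟨h1, ?_⟩
  rw [h1, h2, etaSeq, integral_smul_measure, ENNReal.toReal_inv, smul_eq_mul,
    div_eq_inv_mul]
end
end

section
/- (Proposition 4.3, one-step variance comparison) Let μ be a probability measure on X_{p-1}, let ε ≥ 0 satisfy ε · ‖G_{p-1}‖_∞ ≤ 1, and let f be a bounded measurable function on X_p. Then μ[(S_{p-1,μ}(M_p f))²] − (Ψ_{p-1}(μ)(M_p f))² = μ[(S_{p-1,μ}(M_p f) − Ψ_{p-1}(μ)(M_p f))²] ≥ 0, and consequently the ε-bootstrap local asymptotic variance is no larger than the bootstrap one: μ[S_{p-1,μ} M_p f² − (S_{p-1,μ} M_p f)²] ≤ Ψ_{p-1}(μ)(M_p f²) − (Ψ_{p-1}(μ)(M_p f))². -/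
open MeasureTheory ProbabilityTheory Filter Finset
open scoped ENNReal NNReal Topology Classical

noncomputable section

open FKisland


section helpers
variable {α : Type*} [MeasurableSpace α]

lemma integrable_of_bdd {μ : Measure α} [IsFiniteMeasure μ] {g : α → ℝ}
    (hg : Measurable g) {D : ℝ} (hgD : ∀ x, |g x| ≤ D) : Integrable g μ := by
  refine (integrable_const D).mono' hg.aestronglyMeasurable ?_
  filter_upwards with x
  simpa [Real.norm_eq_abs] using hgD x

lemma bg_lintegral (G : α → ℝ) (hGmeas : Measurable G) (hGpos : ∀ x, 0 < G x)
    (C : ℝ) (hGle : ∀ x, G x ≤ C) (μ : Measure α) [IsProbabilityMeasure μ] :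
    (∫⁻ x, ENNReal.ofReal (G x) ∂μ) = ENNReal.ofReal (∫ x, G x ∂μ)
      ∧ 0 < ∫ x, G x ∂μ := by
  have hGint : Integrable G μ := integrable_of_bdd hGmeas
    (fun x => by rw [abs_of_pos (hGpos x)]; exact hGle x)
  constructor
  · exact (ofReal_integral_eq_lintegral_ofReal hGint
      (Filter.Eventually.of_forall fun x => (hGpos x).le)).symm
  · rw [integral_pos_iff_support_of_nonneg (fun x => (hGpos x).le) hGint]
    have : Function.support G = Set.univ :=
      Set.eq_univ_of_forall fun x => (hGpos x).ne'
    rw [this]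
    simp

lemma bg_key (G : α → ℝ) (hGmeas : Measurable G) (hGpos : ∀ x, 0 < G x)
    (C : ℝ) (hGle : ∀ x, G x ≤ C)
    (μ : Measure α) [IsProbabilityMeasure μ] (g : α → ℝ) :
    ∫ z, g z ∂(boltzmannGibbs G μ) = (∫ x, G x ∂μ)⁻¹ * ∫ x, G x * g x ∂μ := by
  obtain ⟨hL, hIpos⟩ := bg_lintegral G hGmeas hGpos C hGle μ
  have hcoe : (fun x => ENNReal.ofReal (G x))
      = fun x => ((Real.toNNReal (G x) : ℝ≥0) : ℝ≥0∞) := rfl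
  rw [boltzmannGibbs, integral_smul_measure, hL, hcoe,
    integral_withDensity_eq_integral_smul hGmeas.real_toNNReal]
  have : ∀ x, (Real.toNNReal (G x)) • g x = G x * g x := by
    intro x
    rw [NNReal.smul_def, Real.coe_toNNReal _ (hGpos x).le, smul_eq_mul]
  simp_rw [this]
  rw [ENNReal.toReal_inv, ENNReal.toReal_ofReal hIpos.le, smul_eq_mul]

lemma bg_isProb (G : α → ℝ) (hGmeas : Measurable G) (hGpos : ∀ x, 0 < G x)
    (C : ℝ) (hGle : ∀ x, G x ≤ C)
    (μ : Measure α) [IsProbabilityMeasure μ] :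
    IsProbabilityMeasure (boltzmannGibbs G μ) := by
  obtain ⟨hL, hIpos⟩ := bg_lintegral G hGmeas hGpos C hGle μ
  constructor
  rw [boltzmannGibbs, Measure.smul_apply, withDensity_apply _ MeasurableSet.univ,
    setLIntegral_univ, smul_eq_mul]
  rw [hL] at *
  exact ENNReal.inv_mul_cancel (by simpa using hIpos) ENNReal.ofReal_ne_top

lemma eps_integral (G : α → ℝ) (hGmeas : Measurable G) (hGpos : ∀ x, 0 < G x)
    (C : ℝ) (hGle : ∀ x, G x ≤ C)
    (ε : ℝ) (hε : 0 ≤ ε) (hεC : ε * C ≤ 1)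
    (μ : Measure α) [IsProbabilityMeasure μ]
    (g : α → ℝ) (hg : Measurable g) (D : ℝ) (hgD : ∀ x, |g x| ≤ D) (x : α) :
    ∫ z, g z ∂(epsSelect G ε μ x)
      = ε * G x * g x + (1 - ε * G x) * ∫ z, g z ∂(boltzmannGibbs G μ) := by
  have hbp := bg_isProb G hGmeas hGpos C hGle μ
  have h1 : 0 ≤ ε * G x := mul_nonneg hε (hGpos x).le
  have h2 : ε * G x ≤ 1 := le_trans (by
    rcases eq_or_lt_of_le hε with h | h
    · simp [← h]
    · exact (mul_le_mul_iff_right₀ h).2 (hGle x)) hεC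
  have hid : Integrable g ((ENNReal.ofReal (ε * G x)) • (Measure.dirac x : Measure α)) :=
    (integrable_of_bdd hg hgD).smul_measure ENNReal.ofReal_ne_top
  have hib : Integrable g ((ENNReal.ofReal (1 - ε * G x)) • boltzmannGibbs G μ) :=
    (integrable_of_bdd hg hgD).smul_measure ENNReal.ofReal_ne_top
  rw [epsSelect, integral_add_measure hid hib, integral_smul_measure, integral_smul_measure,
    integral_dirac' g x hg.stronglyMeasurable,
    ENNReal.toReal_ofReal h1, ENNReal.toReal_ofReal (by linarith), smul_eq_mul, smul_eq_mul]

end helpers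

/-- **Proposition 4.3, one-step variance comparison.**
`μ[(S_{p-1,μ}(M_p f))²] − (Ψ_{p-1}(μ)(M_p f))² = μ[(S_{p-1,μ}(M_p f) − Ψ_{p-1}(μ)(M_p f))²] ≥ 0`,
and consequently the ε-bootstrap local asymptotic variance is no larger than the
bootstrap one:
`μ[S_{p-1,μ} M_p f² − (S_{p-1,μ} M_p f)²] ≤ Ψ_{p-1}(μ)(M_p f²) − (Ψ_{p-1}(μ)(M_p f))²`. -/
theorem statement10 {α β : Type*} [MeasurableSpace α] [MeasurableSpace β]
    (M : Kernel α β) [IsMarkovKernel M]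
    (G : α → ℝ) (hGmeas : Measurable G) (hGpos : ∀ x, 0 < G x)
    (C : ℝ) (hGle : ∀ x, G x ≤ C)
    (ε : ℝ) (hε : 0 ≤ ε) (hεC : ε * C ≤ 1)
    (μ : Measure α) [IsProbabilityMeasure μ]
    (f : β → ℝ) (hf : Measurable f) (hfb : ∃ D, ∀ y, |f y| ≤ D) :
    (∫ x, (∫ z, (∫ y, f y ∂(M z)) ∂(epsSelect G ε μ x)) ^ 2 ∂μ
          - (∫ z, (∫ y, f y ∂(M z)) ∂(boltzmannGibbs G μ)) ^ 2
        = ∫ x, ((∫ z, (∫ y, f y ∂(M z)) ∂(epsSelect G ε μ x))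
              - ∫ z, (∫ y, f y ∂(M z)) ∂(boltzmannGibbs G μ)) ^ 2 ∂μ)
    ∧ (0 ≤ ∫ x, ((∫ z, (∫ y, f y ∂(M z)) ∂(epsSelect G ε μ x))
              - ∫ z, (∫ y, f y ∂(M z)) ∂(boltzmannGibbs G μ)) ^ 2 ∂μ)
    ∧ (∫ x, (∫ z, (∫ y, f y ^ 2 ∂(M z)) ∂(epsSelect G ε μ x))
            - (∫ z, (∫ y, f y ∂(M z)) ∂(epsSelect G ε μ x)) ^ 2 ∂μ
          ≤ (∫ z, (∫ y, f y ^ 2 ∂(M z)) ∂(boltzmannGibbs G μ))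
            - (∫ z, (∫ y, f y ∂(M z)) ∂(boltzmannGibbs G μ)) ^ 2) := by
  obtain ⟨D, hD⟩ := hfb
  haveI : Nonempty α := μ.nonempty_of_neZero
  obtain ⟨x0⟩ := ‹Nonempty α›
  have hC0 : 0 ≤ C := (hGpos x0).le.trans (hGle x0)
  haveI hbp := bg_isProb G hGmeas hGpos C hGle μ
  -- the two kernel-averaged functions
  set g : α → ℝ := fun z => ∫ y, f y ∂(M z) with hgdef
  set g2 : α → ℝ := fun z => ∫ y, f y ^ 2 ∂(M z) with hg2def
  have hgm : Measurable g := by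
    have : StronglyMeasurable fun p : α × β => f p.2 :=
      hf.stronglyMeasurable.comp_measurable measurable_snd
    exact this.integral_kernel_prod_right'.measurable
  have hg2m : Measurable g2 := by
    have : StronglyMeasurable fun p : α × β => f p.2 ^ 2 :=
      (hf.pow_const 2).stronglyMeasurable.comp_measurable measurable_snd
    exact this.integral_kernel_prod_right'.measurable
  have hgD : ∀ z, |g z| ≤ D := by
    intro z
    have := norm_integral_le_of_norm_le_const (μ := M z) (f := f) (C := D)
      (Filter.Eventually.of_forall fun y => by simpa [Real.norm_eq_abs] using hD y)
    simpa [Real.norm_eq_abs] using this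
  have hg2D : ∀ z, |g2 z| ≤ D ^ 2 := by
    intro z
    have := norm_integral_le_of_norm_le_const (μ := M z) (f := fun y => f y ^ 2) (C := D ^ 2)
      (Filter.Eventually.of_forall fun y => by
        rw [Real.norm_eq_abs, abs_pow]
        exact pow_le_pow_left₀ (abs_nonneg _) (hD y) 2)
    simpa [Real.norm_eq_abs] using this
  have hD0 : 0 ≤ D := (abs_nonneg _).trans (hgD x0)
  -- abbreviations
  set b : ℝ := ∫ z, g z ∂(boltzmannGibbs G μ) with hbdef
  set b2 : ℝ := ∫ z, g2 z ∂(boltzmannGibbs G μ) with hb2def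
  set I : ℝ := ∫ x, G x ∂μ with hIdef
  have hIpos : 0 < I := (bg_lintegral G hGmeas hGpos C hGle μ).2
  have hIG : Integrable G μ := integrable_of_bdd hGmeas
    (fun x => by rw [abs_of_pos (hGpos x)]; exact hGle x)
  have heps : ∀ x, 0 ≤ ε * G x ∧ ε * G x ≤ 1 := by
    intro x
    refine ⟨mul_nonneg hε (hGpos x).le, le_trans ?_ hεC⟩
    exact mul_le_mul_of_nonneg_left (hGle x) hε
  -- generic facts for a bounded measurable h
  have main : ∀ (h : α → ℝ), Measurable h → ∀ E : ℝ, (∀ z, |h z| ≤ E) →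
      ∫ x, (ε * G x * h x + (1 - ε * G x) * (∫ z, h z ∂(boltzmannGibbs G μ))) ∂μ
        = ∫ z, h z ∂(boltzmannGibbs G μ) := by
    intro h hm E hE
    set c : ℝ := ∫ z, h z ∂(boltzmannGibbs G μ) with hcdef
    have hE0 : 0 ≤ E := (abs_nonneg _).trans (hE x0)
    have hGh : Integrable (fun x => G x * h x) μ := integrable_of_bdd
      (hGmeas.mul hm) (D := C * E) (fun x => by
        rw [abs_mul]
        exact mul_le_mul (by rw [abs_of_pos (hGpos x)]; exact hGle x) (hE x)
          (abs_nonneg _) hC0)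
    have key : ∫ x, G x * h x ∂μ = I * c := by
      have := bg_key G hGmeas hGpos C hGle μ h
      rw [← hcdef, ← hIdef] at this
      rw [this]
      field_simp
    have hi1 : Integrable (fun x => ε * G x * h x) μ := by
      simpa [mul_assoc] using hGh.const_mul ε
    have hi2 : Integrable (fun x => (1 - ε * G x) * c) μ :=
      (((integrable_const 1).sub (hIG.const_mul ε)).mul_const c)
    rw [integral_add hi1 hi2]
    have e1 : ∫ x, ε * G x * h x ∂μ = ε * (I * c) := by
      simp_rw [mul_assoc]
      rw [integral_const_mul, key]
    have e2 : ∫ x, (1 - ε * G x) * c ∂μ = (1 - ε * I) * c := by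
      rw [integral_mul_const]
      congr 1
      rw [integral_sub (integrable_const 1) (hIG.const_mul ε), integral_const_mul,
        integral_const]
      simp [hIdef]
    rw [e1, e2]; ring
  -- rewrite the eps-select integrals
  have h1 : ∀ x, (∫ z, g z ∂(epsSelect G ε μ x)) = ε * G x * g x + (1 - ε * G x) * b :=
    fun x => eps_integral G hGmeas hGpos C hGle ε hε hεC μ g hgm D hgD x
  have h2 : ∀ x, (∫ z, g2 z ∂(epsSelect G ε μ x)) = ε * G x * g2 x + (1 - ε * G x) * b2 :=
    fun x => eps_integral G hGmeas hGpos C hGle ε hε hεC μ g2 hg2m (D ^ 2) hg2D x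
  simp only [h1, h2, ← hbdef, ← hb2def]
  -- F and its integrability
  set F : α → ℝ := fun x => ε * G x * g x + (1 - ε * G x) * b with hFdef
  have hbabs : |b| ≤ D := by
    have := norm_integral_le_of_norm_le_const (μ := boltzmannGibbs G μ) (f := g) (C := D)
      (Filter.Eventually.of_forall fun z => by simpa [Real.norm_eq_abs] using hgD z)
    simpa [Real.norm_eq_abs, ← hbdef] using this
  have hFm : Measurable F :=
    ((hGmeas.const_mul ε).mul hgm).add ((((measurable_const.sub (hGmeas.const_mul ε)))).mul_const b)
  have hFb : ∀ x, |F x| ≤ D + D := by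
    intro x
    obtain ⟨ha, hb'⟩ := heps x
    calc |F x| ≤ |ε * G x * g x| + |(1 - ε * G x) * b| := abs_add_le _ _
      _ ≤ 1 * D + 1 * D := by
          rw [abs_mul (ε * G x) (g x), abs_mul (1 - ε * G x) b,
            abs_of_nonneg ha, abs_of_nonneg (by linarith : (0:ℝ) ≤ 1 - ε * G x)]
          have t1 := mul_le_mul hb' (hgD x) (abs_nonneg _) zero_le_one
          have t2 := mul_le_mul (by linarith : 1 - ε * G x ≤ 1) hbabs (abs_nonneg _) zero_le_one
          linarith
      _ = D + D := by ring
  have hFint : Integrable F μ := integrable_of_bdd hFm hFb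
  have hF2int : Integrable (fun x => F x ^ 2) μ := integrable_of_bdd (hFm.pow_const 2)
    (D := (D + D) ^ 2) (fun x => by
      rw [abs_pow]
      exact pow_le_pow_left₀ (abs_nonneg _) (hFb x) 2)
  have hIF : ∫ x, F x ∂μ = b := main g hgm D hgD
  -- claim A
  have claimA : ∫ x, F x ^ 2 ∂μ - b ^ 2 = ∫ x, (F x - b) ^ 2 ∂μ := by
    have expand : ∀ x, (F x - b) ^ 2 = F x ^ 2 - (2 * b * F x - b ^ 2) := by
      intro x; ring
    have e1 := integral_sub hF2int (show Integrable (fun x => 2 * b * F x - b ^ 2) μ from (hFint.const_mul (2 * b)).sub (integrable_const (b ^ 2)))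
    have e2 := integral_sub (hFint.const_mul (2 * b)) (integrable_const (b ^ 2))
    have e3 : ∫ x, 2 * b * F x ∂μ = 2 * b * b := by rw [integral_const_mul, hIF]
    simp_rw [expand]
    rw [e1, e2, e3, integral_const]
    simp [measure_univ]
    ring
  have claimB : 0 ≤ ∫ x, (F x - b) ^ 2 ∂μ :=
    integral_nonneg fun x => sq_nonneg _
  refine ⟨claimA, claimB, ?_⟩
  -- claim C
  set F2 : α → ℝ := fun x => ε * G x * g2 x + (1 - ε * G x) * b2 with hF2def
  have hb2abs : |b2| ≤ D ^ 2 := by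
    have := norm_integral_le_of_norm_le_const (μ := boltzmannGibbs G μ) (f := g2) (C := D ^ 2)
      (Filter.Eventually.of_forall fun z => by simpa [Real.norm_eq_abs] using hg2D z)
    simpa [Real.norm_eq_abs, ← hb2def] using this
  have hF2m : Measurable F2 :=
    ((hGmeas.const_mul ε).mul hg2m).add ((((measurable_const.sub (hGmeas.const_mul ε)))).mul_const b2)
  have hF2b : ∀ x, |F2 x| ≤ D ^ 2 + D ^ 2 := by
    intro x
    obtain ⟨ha, hb'⟩ := heps x
    calc |F2 x| ≤ |ε * G x * g2 x| + |(1 - ε * G x) * b2| := abs_add_le _ _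
      _ ≤ 1 * D ^ 2 + 1 * D ^ 2 := by
          rw [abs_mul (ε * G x) (g2 x), abs_mul (1 - ε * G x) b2,
            abs_of_nonneg ha, abs_of_nonneg (by linarith : (0:ℝ) ≤ 1 - ε * G x)]
          have t1 := mul_le_mul hb' (hg2D x) (abs_nonneg _) zero_le_one
          have t2 := mul_le_mul (by linarith : 1 - ε * G x ≤ 1) hb2abs (abs_nonneg _) zero_le_one
          linarith
      _ = D ^ 2 + D ^ 2 := by ring
  have hF2sint : Integrable F2 μ := integrable_of_bdd hF2m hF2b
  have hIF2 : ∫ x, F2 x ∂μ = b2 := main g2 hg2m (D ^ 2) hg2D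
  have : ∫ x, (F2 x - F x ^ 2) ∂μ = b2 - ∫ x, F x ^ 2 ∂μ := by
    have e := integral_sub hF2sint hF2int
    rw [e, hIF2]
  have hsq : b ^ 2 ≤ ∫ x, F x ^ 2 ∂μ := by linarith [claimA, claimB]
  calc ∫ x, (F2 x - F x ^ 2) ∂μ = b2 - ∫ x, F x ^ 2 ∂μ := this
    _ ≤ b2 - b ^ 2 := by linarith
end
end

section
/- (Lemma 6.3) For the bootstrap island model, let boldQ_{n}(x, dy) = boldG_{n-1}(x) boldM_n(x, dy) with boldG_{n-1}(x) = N1^{-1} Σ_i G_{n-1}(x^i), and for p ≤ n let boldQ_{p,n} = boldQ_{p+1} ⋯ boldQ_n and the normalized kernel boldQ̄_{p,n} = boldQ_{p,n} / (boldη_p boldQ_{p,n}(1)). Then for every bounded measurable f on X_n and the lifted function F(x) = N1^{-1} Σ_{i=1}^{N1} f(x^i): (i) boldQ_n F (x) = N1^{-1} Σ_i (Q_n f)(x^i); (ii) for all p ≤ n, boldQ_{p,n} F (x) = N1^{-1} Σ_i (Q_{p,n} f)(x^i); (iii) for all p ≤ n, boldQ̄_{p,n} F (x) = N1^{-1} Σ_i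 (Q̄_{p,n} f)(x^i), where Q̄_{p,n} = Q_{p,n} / (η_p Q_{p,n}(1)). -/
open MeasureTheory ProbabilityTheory Filter Finset
open scoped ENNReal NNReal Topology Classical

noncomputable section

open FKisland

section AuxLemmas
variable {α β : Type*} [MeasurableSpace α] [MeasurableSpace β]

lemma aux_map_eval {β : Type*} [MeasurableSpace β] (ν : Measure β) [IsProbabilityMeasure ν]
    {N : ℕ} (i : Fin N) :
    (Measure.pi fun _ : Fin N => ν).map (fun z => z i) = ν := by
  ext s hs
  rw [Measure.map_apply (measurable_pi_apply i) hs]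
  have hpre : (fun z : Fin N → β => z i) ⁻¹' s
      = Set.pi Set.univ (Function.update (fun _ : Fin N => (Set.univ : Set β)) i s) := by
    ext z
    simp only [Set.mem_preimage, Set.mem_pi, Set.mem_univ, forall_true_left]
    constructor
    · intro hz j
      by_cases hj : j = i
      · subst hj; simpa using hz
      · simp [Function.update_of_ne hj]
    · intro hz; simpa using hz i
  rw [hpre, Measure.pi_pi]
  rw [Finset.prod_eq_single i (fun j _ hj => by simp [Function.update_of_ne hj]) (by simp)]
  simp

lemma aux_integral_eval {β : Type*} [MeasurableSpace β] (ν : Measure β) [IsProbabilityMeasure ν]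
    {N : ℕ} (i : Fin N) {f : β → ℝ} (hf : Measurable f) :
    ∫ z : Fin N → β, f (z i) ∂(Measure.pi fun _ : Fin N => ν) = ∫ y, f y ∂ν := by
  have h := integral_map (μ := Measure.pi fun _ : Fin N => ν)
    (measurable_pi_apply i).aemeasurable hf.aestronglyMeasurable
  rw [← h, aux_map_eval ν i]

lemma aux_integral_lift_pi {β : Type*} [MeasurableSpace β] (ν : Measure β)
    [IsProbabilityMeasure ν] {N : ℕ} (hN : 1 ≤ N) {f : β → ℝ} (hf : Measurable f)
    {C : ℝ} (hfb : ∀ y, |f y| ≤ C) :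
    ∫ z : Fin N → β, (N : ℝ)⁻¹ * ∑ i, f (z i) ∂(Measure.pi fun _ : Fin N => ν)
      = ∫ y, f y ∂ν := by
  rw [integral_const_mul, integral_finset_sum]
  · have : ∀ i : Fin N, ∫ z : Fin N → β, f (z i) ∂(Measure.pi fun _ : Fin N => ν)
        = ∫ y, f y ∂ν := fun i => aux_integral_eval ν i hf
    rw [Finset.sum_congr rfl fun i _ => this i, Finset.sum_const, Finset.card_univ,
      Fintype.card_fin, nsmul_eq_mul]
    have hN0 : (N : ℝ) ≠ 0 := by positivity
    field_simp
  · intro i _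
    exact ⟨(hf.comp (measurable_pi_apply i)).aestronglyMeasurable,
      HasFiniteIntegral.of_bounded (C := C)
        (Eventually.of_forall fun z => by simpa [Real.norm_eq_abs] using hfb (z i))⟩


lemma aux_integrable_of_bdd (μ : Measure α) [IsFiniteMeasure μ]
    {f : α → ℝ} (hf : Measurable f) {C : ℝ} (h : ∀ x, |f x| ≤ C) : Integrable f μ :=
  ⟨hf.aestronglyMeasurable, HasFiniteIntegral.of_bounded (C := C)
    (Eventually.of_forall (by simpa [Real.norm_eq_abs] using h))⟩

lemma aux_measurable_integral (κ : α → Measure β) (hκ : Measurable κ)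
    (hp : ∀ x, IsProbabilityMeasure (κ x))
    {f : β → ℝ} (hf : Measurable f) : Measurable fun x => ∫ y, f y ∂(κ x) := by
  have : IsMarkovKernel (⟨κ, hκ⟩ : Kernel α β) := ⟨hp⟩
  exact (StronglyMeasurable.integral_kernel_prod_right (κ := (⟨κ, hκ⟩ : Kernel α β))
    (f := fun _ y => f y) ((hf.comp measurable_snd).stronglyMeasurable)).measurable

lemma aux_abs_integral_le (μ : Measure β) [IsProbabilityMeasure μ]
    {f : β → ℝ} {C : ℝ} (hfb : ∀ y, |f y| ≤ C) : |∫ y, f y ∂μ| ≤ C := by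
  have := norm_integral_le_of_norm_le_const (μ := μ) (f := f) (C := C)
    (Eventually.of_forall fun y => by simpa [Real.norm_eq_abs] using hfb y)
  simpa [Real.norm_eq_abs] using this

lemma aux_nu_meas (M : α → Measure β) (hMm : Measurable M) {G : α → ℝ}
    (hGm : Measurable G) {N : ℕ} :
    Measurable fun x : Fin N → α =>
      (∑ k, ENNReal.ofReal (G (x k)))⁻¹ • ∑ j, ENNReal.ofReal (G (x j)) • M (x j) := by
  apply Measure.measurable_of_measurable_coe
  intro s hs
  simp only [Measure.smul_apply, Measure.coe_finset_sum, Finset.sum_apply, smul_eq_mul]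
  refine Measurable.mul (Measurable.inv ?_) ?_
  · exact Finset.measurable_sum _ fun k _ =>
      ENNReal.measurable_ofReal.comp (hGm.comp (measurable_pi_apply k))
  · exact Finset.measurable_sum _ fun j _ =>
      (ENNReal.measurable_ofReal.comp (hGm.comp (measurable_pi_apply j))).mul
        ((Measure.measurable_coe hs).comp (hMm.comp (measurable_pi_apply j)))

lemma aux_pi_meas (κ : α → Measure β) (hκ : Measurable κ)
    (hp : ∀ x, IsProbabilityMeasure (κ x)) (N : ℕ) :
    Measurable fun x => Measure.pi (fun _ : Fin N => κ x) := by
  haveI : ∀ x, IsProbabilityMeasure (Measure.pi (fun _ : Fin N => κ x)) := fun x => by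
    haveI := hp x; infer_instance
  apply Measure.measurable_of_measurable_coe
  intro s hs
  refine MeasurableSpace.induction_on_inter
    (C := fun s _ => Measurable fun x => Measure.pi (fun _ : Fin N => κ x) s)
    generateFrom_pi.symm isPiSystem_pi ?_ ?_ ?_ ?_ _ hs
  · simp only [measure_empty]; exact measurable_const
  · rintro t ⟨S, hS, rfl⟩
    have heq : ∀ x, Measure.pi (fun _ : Fin N => κ x) (Set.pi Set.univ S)
        = ∏ i, κ x (S i) := fun x => by
      haveI := hp x; exact Measure.pi_pi _ _
    simp only [heq]
    exact Finset.measurable_prod _ fun i _ =>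
      (Measure.measurable_coe (hS i (Set.mem_univ i))).comp hκ
  · intro t ht iht
    have heq : ∀ x, Measure.pi (fun _ : Fin N => κ x) tᶜ
        = 1 - Measure.pi (fun _ : Fin N => κ x) t := fun x => by
      rw [measure_compl ht (measure_ne_top _ _), measure_univ]
    simp only [heq]
    exact measurable_const.sub iht
  · intro g hdisj hgmeas ihg
    have heq : ∀ x, Measure.pi (fun _ : Fin N => κ x) (⋃ i, g i)
        = ∑' i, Measure.pi (fun _ : Fin N => κ x) (g i) := fun x =>
      measure_iUnion hdisj hgmeas
    simp only [heq]
    exact Measurable.ennreal_tsum ihg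

lemma aux_isFiniteMeasure_bind (μ : Measure α) [IsFiniteMeasure μ] (κ : α → Measure β)
    (hκ : Measurable κ) (hp : ∀ x, IsProbabilityMeasure (κ x)) :
    IsFiniteMeasure (μ.bind κ) := by
  constructor
  rw [Measure.bind_apply MeasurableSet.univ hκ.aemeasurable]
  have : ∀ x, κ x Set.univ = 1 := fun x => (hp x).measure_univ
  simp only [this, lintegral_one]
  exact measure_lt_top μ _

lemma aux_integral_bind_nonneg (μ : Measure α) [IsFiniteMeasure μ] (κ : α → Measure β)
    (hκ : Measurable κ) (hp : ∀ x, IsProbabilityMeasure (κ x))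
    {f : β → ℝ} (hf : Measurable f) {C : ℝ} (hfb : ∀ y, |f y| ≤ C) (hf0 : ∀ y, 0 ≤ f y) :
    ∫ y, f y ∂(μ.bind κ) = ∫ x, ∫ y, f y ∂(κ x) ∂μ := by
  haveI := fun x => hp x
  rw [integral_eq_lintegral_of_nonneg_ae (Eventually.of_forall hf0) hf.aestronglyMeasurable,
    Measure.lintegral_bind (μ := κ) (f := fun y => ENNReal.ofReal (f y)) hκ.aemeasurable hf.ennreal_ofReal.aemeasurable]
  have h2 : ∀ x, ∫⁻ y, ENNReal.ofReal (f y) ∂(κ x) = ENNReal.ofReal (∫ y, f y ∂(κ x)) :=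
    fun x => (ofReal_integral_eq_lintegral_ofReal (aux_integrable_of_bdd _ hf hfb)
      (Eventually.of_forall hf0)).symm
  simp only [h2]
  rw [integral_eq_lintegral_of_nonneg_ae
    (Eventually.of_forall fun x => integral_nonneg hf0)
    (aux_measurable_integral κ hκ hp hf).aestronglyMeasurable]

lemma aux_integral_bind (μ : Measure α) [IsFiniteMeasure μ] (κ : α → Measure β)
    (hκ : Measurable κ) (hp : ∀ x, IsProbabilityMeasure (κ x))
    {f : β → ℝ} (hf : Measurable f) {C : ℝ} (hfb : ∀ y, |f y| ≤ C) :
    ∫ y, f y ∂(μ.bind κ) = ∫ x, ∫ y, f y ∂(κ x) ∂μ := by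
  haveI := aux_isFiniteMeasure_bind μ κ hκ hp
  rcases isEmpty_or_nonempty β with hβ | hβ
  · have h0 : ∀ ν : Measure β, ν = 0 := fun ν => ν.eq_zero_of_isEmpty
    have hx : ∀ x, ∫ y, f y ∂(κ x) = 0 := fun x => by
      rw [h0 (κ x), integral_zero_measure]
    rw [h0 (μ.bind κ), integral_zero_measure]
    simp [hx]
  · have hC0 : 0 ≤ C := le_trans (abs_nonneg _) (hfb (Classical.arbitrary β))
    have hg0 : ∀ y, 0 ≤ f y + C := fun y => by
      have := (abs_le.1 (hfb y)).1; linarith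
    have hgb : ∀ y, |f y + C| ≤ C + C := fun y => by
      have := abs_le.1 (hfb y); rw [abs_le]; constructor <;> linarith
    have key := aux_integral_bind_nonneg μ κ hκ hp (f := fun y => f y + C) (hf.add measurable_const) hgb hg0
    have hfint : Integrable f (μ.bind κ) := aux_integrable_of_bdd _ hf hfb
    have hfintx : ∀ x, Integrable f (κ x) := fun x => by
      haveI := hp x; exact aux_integrable_of_bdd _ hf hfb
    have hxint : Integrable (fun x => ∫ y, f y ∂(κ x)) μ :=
      aux_integrable_of_bdd _ (aux_measurable_integral κ hκ hp hf) (fun x => by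
        haveI := hp x; exact aux_abs_integral_le _ hfb)
    rw [integral_add hfint (integrable_const C), integral_const, smul_eq_mul, measureReal_def] at key
    have h3 : ∀ x, ∫ y, f y + C ∂(κ x) = ∫ y, f y ∂(κ x) + C := fun x => by
      haveI := hp x
      rw [integral_add (hfintx x) (integrable_const C), integral_const]
      simp
    have h4 : ∫ x, ∫ y, f y + C ∂(κ x) ∂μ = ∫ x, ∫ y, f y ∂(κ x) ∂μ
        + C * (μ Set.univ).toReal := by
      rw [integral_congr_ae (Eventually.of_forall h3),
        integral_add hxint (integrable_const C), integral_const, smul_eq_mul, measureReal_def]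
      ring
    have hmass : ((μ.bind κ) Set.univ).toReal = (μ Set.univ).toReal := by
      rw [Measure.bind_apply MeasurableSet.univ hκ.aemeasurable]
      simp [fun x => (hp x).measure_univ]
    rw [h4, hmass] at key
    linarith



lemma aux_nu_prob (M : α → Measure β) (hMp : ∀ a, IsProbabilityMeasure (M a))
    {G : α → ℝ} (hGpos : ∀ a, 0 < G a) {N : ℕ} (hN : 1 ≤ N) (x : Fin N → α) :
    IsProbabilityMeasure
      ((∑ k, ENNReal.ofReal (G (x k)))⁻¹ • ∑ j, ENNReal.ofReal (G (x j)) • M (x j)) := by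
  have hc0 : (∑ k, ENNReal.ofReal (G (x k))) ≠ 0 := by
    have h1 : (0:ℝ≥0∞) < ENNReal.ofReal (G (x ⟨0, hN⟩)) := ENNReal.ofReal_pos.2 (hGpos _)
    have h2 : ENNReal.ofReal (G (x ⟨0, hN⟩)) ≤ ∑ k, ENNReal.ofReal (G (x k)) :=
      Finset.single_le_sum (f := fun k => ENNReal.ofReal (G (x k)))
        (fun i _ => by positivity) (Finset.mem_univ _)
    exact (lt_of_lt_of_le h1 h2).ne'
  have hctop : (∑ k, ENNReal.ofReal (G (x k))) ≠ ⊤ :=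
    (ENNReal.sum_lt_top.2 fun _ _ => ENNReal.ofReal_lt_top).ne
  constructor
  simp only [Measure.smul_apply, Measure.coe_finset_sum, Finset.sum_apply, smul_eq_mul,
    measure_univ, mul_one]
  exact ENNReal.inv_mul_cancel hc0 hctop

lemma aux_boldQ_step (M : α → Measure β) (hMm : Measurable M)
    (hMp : ∀ a, IsProbabilityMeasure (M a))
    {G : α → ℝ} (hGm : Measurable G) (hGpos : ∀ a, 0 < G a)
    {N : ℕ} (hN : 1 ≤ N) {f : β → ℝ} (hf : Measurable f) {C : ℝ} (hfb : ∀ y, |f y| ≤ C)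
    (x : Fin N → α) :
    ((N:ℝ)⁻¹ * ∑ i, G (x i)) * ∫ z, (N:ℝ)⁻¹ * ∑ i, f (z i) ∂(FKisland.bootStep M G x)
      = (N:ℝ)⁻¹ * ∑ i, G (x i) * ∫ y, f y ∂(M (x i)) := by
  haveI := aux_nu_prob M hMp hGpos hN x
  have hctop : (∑ k, ENNReal.ofReal (G (x k))) ≠ ⊤ :=
    (ENNReal.sum_lt_top.2 fun _ _ => ENNReal.ofReal_lt_top).ne
  have hS : (0:ℝ) < ∑ i, G (x i) :=
    Finset.sum_pos (fun i _ => hGpos _) ⟨⟨0, hN⟩, Finset.mem_univ _⟩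
  have hint : ∀ j : Fin N, Integrable f (M (x j)) := fun j =>
    ⟨hf.aestronglyMeasurable, HasFiniteIntegral.of_bounded (C := C)
      (Eventually.of_forall fun y => by simpa [Real.norm_eq_abs] using hfb y)⟩
  have hν : ∫ z, (N:ℝ)⁻¹ * ∑ i, f (z i) ∂(FKisland.bootStep M G x)
      = (∑ i, G (x i))⁻¹ * ∑ j, G (x j) * ∫ y, f y ∂(M (x j)) := by
    rw [FKisland.bootStep, aux_integral_lift_pi _ hN hf hfb, integral_smul_measure,
      integral_finset_sum_measure (fun j _ => (hint j).smul_measure ENNReal.ofReal_ne_top)]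
    rw [ENNReal.toReal_inv, ENNReal.toReal_sum (fun i _ => ENNReal.ofReal_ne_top)]
    simp only [integral_smul_measure, ENNReal.toReal_ofReal (hGpos _).le, smul_eq_mul]
  rw [hν, ← mul_assoc, mul_assoc ((N:ℝ)⁻¹), mul_inv_cancel₀ hS.ne', mul_one]


lemma aux_isFiniteMeasure_withDensity (μ : Measure α) [IsFiniteMeasure μ]
    {G : α → ℝ} {CG : ℝ} (hCG : ∀ x, G x ≤ CG) :
    IsFiniteMeasure (μ.withDensity fun x => ENNReal.ofReal (G x)) := by
  constructor
  rw [withDensity_apply _ MeasurableSet.univ, setLIntegral_univ]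
  calc ∫⁻ x, ENNReal.ofReal (G x) ∂μ ≤ ∫⁻ _, ENNReal.ofReal CG ∂μ :=
        lintegral_mono fun x => ENNReal.ofReal_le_ofReal (hCG x)
    _ = ENNReal.ofReal CG * μ Set.univ := lintegral_const _
    _ < ⊤ := ENNReal.mul_lt_top ENNReal.ofReal_lt_top (measure_lt_top μ _)

lemma aux_integral_withDensity (μ : Measure α) {G : α → ℝ} (hGm : Measurable G)
    (hG0 : ∀ x, 0 ≤ G x) (h : α → ℝ) :
    ∫ x, h x ∂(μ.withDensity fun x => ENNReal.ofReal (G x)) = ∫ x, G x * h x ∂μ := by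
  have heq : (fun x => ENNReal.ofReal (G x))
      = fun x => (((fun x => (G x).toNNReal) x : ℝ≥0) : ℝ≥0∞) := rfl
  rw [heq, integral_withDensity_eq_integral_smul hGm.real_toNNReal h]
  congr 1
  funext x
  rw [NNReal.smul_def, Real.coe_toNNReal _ (hG0 x), smul_eq_mul]

lemma aux_gamma_finite {S : ℕ → Type*} [∀ n, MeasurableSpace (S n)]
    (init : Measure (S 0)) [IsFiniteMeasure init]
    (step : ∀ n, S n → Measure (S (n + 1))) (hstep : ∀ n, Measurable (step n))
    (hprob : ∀ n x, IsProbabilityMeasure (step n x))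
    (G : ∀ n, S n → ℝ) (CG : ℕ → ℝ) (hCG : ∀ n x, G n x ≤ CG n) :
    ∀ n, IsFiniteMeasure (FKisland.gammaSeq init step G n) := by
  intro n
  induction n with
  | zero => exact ‹IsFiniteMeasure init›
  | succ n ih =>
    haveI := ih
    haveI := aux_isFiniteMeasure_withDensity (FKisland.gammaSeq init step G n) (hCG n)
    exact aux_isFiniteMeasure_bind _ _ (hstep n) (hprob n)

lemma aux_gamma_step {S : ℕ → Type*} [∀ n, MeasurableSpace (S n)]
    (init : Measure (S 0)) [IsFiniteMeasure init]
    (step : ∀ n, S n → Measure (S (n + 1))) (hstep : ∀ n, Measurable (step n))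
    (hprob : ∀ n x, IsProbabilityMeasure (step n x))
    (G : ∀ n, S n → ℝ) (hGm : ∀ n, Measurable (G n)) (hG0 : ∀ n x, 0 ≤ G n x)
    (CG : ℕ → ℝ) (hCG : ∀ n x, G n x ≤ CG n)
    (n : ℕ) {h : S (n + 1) → ℝ} (hh : Measurable h) {C : ℝ} (hhb : ∀ x, |h x| ≤ C) :
    ∫ y, h y ∂(FKisland.gammaSeq init step G (n + 1))
      = ∫ x, G n x * ∫ y, h y ∂(step n x) ∂(FKisland.gammaSeq init step G n) := by
  haveI := aux_gamma_finite init step hstep hprob G CG hCG n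
  haveI := aux_isFiniteMeasure_withDensity (FKisland.gammaSeq init step G n) (hCG n)
  have hrec : FKisland.gammaSeq init step G (n + 1)
      = ((FKisland.gammaSeq init step G n).withDensity
          (fun x => ENNReal.ofReal (G n x))).bind (step n) := rfl
  rw [hrec, aux_integral_bind _ _ (hstep n) (hprob n) hh hhb,
    aux_integral_withDensity _ (hGm n) (hG0 n) _]

lemma aux_Qop_meas_bdd {S : ℕ → Type*} [∀ n, MeasurableSpace (S n)]
    (step : ∀ n, S n → Measure (S (n + 1))) (hstep : ∀ n, Measurable (step n))
    (hprob : ∀ n x, IsProbabilityMeasure (step n x))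
    (G : ∀ n, S n → ℝ) (hGm : ∀ n, Measurable (G n))
    (CG : ℕ → ℝ) (hCG0 : ∀ n, 0 ≤ CG n) (hCG : ∀ n x, |G n x| ≤ CG n) :
    ∀ (p k : ℕ) (f : S (p + k) → ℝ), Measurable f → ∀ C : ℝ, 0 ≤ C → (∀ x, |f x| ≤ C) →
      Measurable (FKisland.Qop step G p k f)
        ∧ ∃ D, 0 ≤ D ∧ ∀ x, |FKisland.Qop step G p k f x| ≤ D := by
  intro p k
  induction k with
  | zero => exact fun f hf C hC0 hfb => ⟨hf, C, hC0, hfb⟩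
  | succ k ih =>
    intro f hf C hC0 hfb
    have hg : Measurable fun x : S (p + k) => G (p + k) x * ∫ y, f y ∂(step (p + k) x) :=
      (hGm _).mul (aux_measurable_integral _ (hstep _) (hprob _) hf)
    have hgb : ∀ x, |G (p + k) x * ∫ y, f y ∂(step (p + k) x)| ≤ CG (p + k) * C := fun x => by
      haveI := hprob (p + k) x
      rw [abs_mul]
      exact mul_le_mul (hCG _ _) (aux_abs_integral_le _ hfb) (abs_nonneg _) (hCG0 _)
    have hrec : FKisland.Qop step G p (k + 1) f
        = FKisland.Qop step G p k
            (fun x => G (p + k) x * ∫ y, f y ∂(step (p + k) x)) := rfl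
    rw [hrec]
    exact ih _ hg _ (mul_nonneg (hCG0 _) hC0) hgb

end AuxLemmas
/-- **Lemma 6.3.** For the bootstrap island model with transitions
`boldM`, potentials `boldG_n(x) = N1⁻¹ Σ_i G_n(x^i)` and initial law `η_0^{⊗N1}`, the
island semigroups act on lifted functions `F(x) = N1⁻¹ Σ_i f(x^i)` as follows:
(i) `boldQ_{p+1} F = N1⁻¹ Σ_i Q_{p+1} f (x^i)`;
(ii) for all `p ≤ n` (`n = p + k`), `boldQ_{p,n} F (x) = N1⁻¹ Σ_i Q_{p,n} f (x^i)`;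
(iii) for all `p ≤ n`, `boldQ̄_{p,n} F (x) = N1⁻¹ Σ_i Q̄_{p,n} f (x^i)`. -/
theorem statement11 {X : ℕ → Type*} [∀ n, MeasurableSpace (X n)]
    (η0 : Measure (X 0)) [IsProbabilityMeasure η0]
    (M : ∀ n, Kernel (X n) (X (n + 1))) [∀ n, IsMarkovKernel (M n)]
    (G : ∀ n, X n → ℝ)
    (hGmeas : ∀ n, Measurable (G n))
    (hGbdd : ∀ n, ∃ C, ∀ x, G n x ≤ C)
    (hGpos : ∀ n x, 0 < G n x)
    {N1 : ℕ} (hN1 : 1 ≤ N1) :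
    (∀ (p : ℕ) (f : X (p + 1) → ℝ), Measurable f → (∃ C, ∀ x, |f x| ≤ C) →
      ∀ x : Fin N1 → X p,
        Qop (S := fun q => Fin N1 → X q)
            (fun l y => bootStep (fun a => M l a) (G l) y)
            (fun l y => (N1 : ℝ)⁻¹ * ∑ i, G l (y i)) p 1
            (fun z => (N1 : ℝ)⁻¹ * ∑ i, f (z i)) x
          = (N1 : ℝ)⁻¹ * ∑ i, Qop (S := X) (fun l a => M l a) G p 1 f (x i))
    ∧ (∀ (p k : ℕ) (f : X (p + k) → ℝ), Measurable f → (∃ C, ∀ x, |f x| ≤ C) →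
      ∀ x : Fin N1 → X p,
        Qop (S := fun q => Fin N1 → X q)
            (fun l y => bootStep (fun a => M l a) (G l) y)
            (fun l y => (N1 : ℝ)⁻¹ * ∑ i, G l (y i)) p k
            (fun z => (N1 : ℝ)⁻¹ * ∑ i, f (z i)) x
          = (N1 : ℝ)⁻¹ * ∑ i, Qop (S := X) (fun l a => M l a) G p k f (x i))
    ∧ (∀ (p k : ℕ) (f : X (p + k) → ℝ), Measurable f → (∃ C, ∀ x, |f x| ≤ C) →
      ∀ x : Fin N1 → X p,
        Qbar (S := fun q => Fin N1 → X q) (Measure.pi fun _ : Fin N1 => η0)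
            (fun l y => bootStep (fun a => M l a) (G l) y)
            (fun l y => (N1 : ℝ)⁻¹ * ∑ i, G l (y i)) p k
            (fun z => (N1 : ℝ)⁻¹ * ∑ i, f (z i)) x
          = (N1 : ℝ)⁻¹ * ∑ i, Qbar (S := X) η0 (fun l a => M l a) G p k f (x i)) := by
  classical
  -- bounds for the potentials
  set CG : ℕ → ℝ := fun n => max (Classical.choose (hGbdd n)) 0 with hCGdef
  have hCG0 : ∀ n, 0 ≤ CG n := fun n => le_max_right _ _
  have hGub : ∀ n x, G n x ≤ CG n := fun n x =>
    le_trans (Classical.choose_spec (hGbdd n) x) (le_max_left _ _)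
  have hCGabs : ∀ n x, |G n x| ≤ CG n := fun n x => by
    rw [abs_of_pos (hGpos n x)]; exact hGub n x
  have hG0 : ∀ n x, 0 ≤ G n x := fun n x => (hGpos n x).le
  have hN0 : (N1 : ℝ) ≠ 0 := Nat.cast_ne_zero.2 (by omega)
  have hNpos : (0:ℝ) < N1 := by positivity
  -- base model data
  have hMm : ∀ l, Measurable (fun a => (M l) a) := fun l => (M l).measurable
  have hMp : ∀ l a, IsProbabilityMeasure ((M l) a) := fun l a => inferInstance
  -- bold model data
  have hbm : ∀ l, Measurable
      (fun y : Fin N1 → X l => bootStep (fun a => M l a) (G l) y) := fun l =>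
    aux_pi_meas
      (fun x : Fin N1 → X l =>
        (∑ k, ENNReal.ofReal (G l (x k)))⁻¹ • ∑ j, ENNReal.ofReal (G l (x j)) • (M l) (x j))
      (aux_nu_meas (fun a => (M l) a) (hMm l) (hGmeas l))
      (fun x => aux_nu_prob _ (hMp l) (hGpos l) hN1 x) N1
  have hbp : ∀ l (y : Fin N1 → X l),
      IsProbabilityMeasure (bootStep (fun a => M l a) (G l) y) := fun l y => by
    haveI := aux_nu_prob (fun a => (M l) a) (hMp l) (hGpos l) hN1 y
    exact inferInstanceAs (IsProbabilityMeasure (Measure.pi fun _ : Fin N1 =>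
      (∑ k, ENNReal.ofReal (G l (y k)))⁻¹ • ∑ j, ENNReal.ofReal (G l (y j)) • (M l) (y j)))
  have hbGm : ∀ l, Measurable
      (fun y : Fin N1 → X l => (N1:ℝ)⁻¹ * ∑ i, G l (y i)) := fun l =>
    measurable_const.mul (Finset.measurable_sum _ fun i _ =>
      (hGmeas l).comp (measurable_pi_apply i))
  have hbG0 : ∀ l (y : Fin N1 → X l), 0 ≤ (N1:ℝ)⁻¹ * ∑ i, G l (y i) := fun l y =>
    mul_nonneg (by positivity) (Finset.sum_nonneg fun i _ => hG0 l (y i))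
  have hbGub : ∀ l (y : Fin N1 → X l), (N1:ℝ)⁻¹ * ∑ i, G l (y i) ≤ CG l := fun l y => by
    have h1 : ∑ i, G l (y i) ≤ (N1:ℝ) * CG l := by
      calc ∑ i, G l (y i) ≤ ∑ _i : Fin N1, CG l := Finset.sum_le_sum fun i _ => hGub l (y i)
        _ = (N1:ℝ) * CG l := by
            rw [Finset.sum_const, Finset.card_univ, Fintype.card_fin, nsmul_eq_mul]
    calc (N1:ℝ)⁻¹ * ∑ i, G l (y i) ≤ (N1:ℝ)⁻¹ * ((N1:ℝ) * CG l) :=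
          mul_le_mul_of_nonneg_left h1 (by positivity)
      _ = CG l := by field_simp
  -- lifted functions
  have hliftm : ∀ (p : ℕ) (g : X p → ℝ), Measurable g →
      Measurable (fun z : Fin N1 → X p => (N1:ℝ)⁻¹ * ∑ i, g (z i)) := fun p g hg =>
    measurable_const.mul (Finset.measurable_sum _ fun i _ => hg.comp (measurable_pi_apply i))
  have hliftb : ∀ (p : ℕ) (g : X p → ℝ) (C : ℝ), (∀ a, |g a| ≤ C) →
      ∀ z : Fin N1 → X p, |(N1:ℝ)⁻¹ * ∑ i, g (z i)| ≤ C := by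
    intro p g C hgb z
    have h1 : |∑ i, g (z i)| ≤ (N1:ℝ) * C := by
      calc |∑ i, g (z i)| ≤ ∑ i, |g (z i)| := Finset.abs_sum_le_sum_abs _ _
        _ ≤ ∑ _i : Fin N1, C := Finset.sum_le_sum fun i _ => hgb (z i)
        _ = (N1:ℝ) * C := by
            rw [Finset.sum_const, Finset.card_univ, Fintype.card_fin, nsmul_eq_mul]
    calc |(N1:ℝ)⁻¹ * ∑ i, g (z i)| = (N1:ℝ)⁻¹ * |∑ i, g (z i)| := by
          rw [abs_mul, abs_of_nonneg (by positivity : (0:ℝ) ≤ (N1:ℝ)⁻¹)]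
      _ ≤ (N1:ℝ)⁻¹ * ((N1:ℝ) * C) := mul_le_mul_of_nonneg_left h1 (by positivity)
      _ = C := by field_simp
  -- part (ii), quantitative version
  have key2 : ∀ (p k : ℕ) (f : X (p + k) → ℝ), Measurable f → ∀ C : ℝ, 0 ≤ C →
      (∀ x, |f x| ≤ C) → ∀ x : Fin N1 → X p,
      Qop (S := fun q => Fin N1 → X q)
          (fun l y => bootStep (fun a => M l a) (G l) y)
          (fun l y => (N1 : ℝ)⁻¹ * ∑ i, G l (y i)) p k
          (fun z => (N1 : ℝ)⁻¹ * ∑ i, f (z i)) x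
        = (N1 : ℝ)⁻¹ * ∑ i, Qop (S := X) (fun l a => M l a) G p k f (x i) := by
    intro p k
    induction k with
    | zero => intro f hf C hC0 hfb x; rfl
    | succ k ih =>
      intro f hf C hC0 hfb x
      have hfun : (fun y : Fin N1 → X (p + k) =>
            ((N1:ℝ)⁻¹ * ∑ i, G (p + k) (y i)) *
              ∫ z, (N1:ℝ)⁻¹ * ∑ i, f (z i) ∂(bootStep (fun a => M (p + k) a) (G (p + k)) y))
          = fun y => (N1:ℝ)⁻¹ * ∑ i, (G (p + k) (y i) * ∫ w, f w ∂((M (p + k)) (y i))) :=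
        funext fun y => aux_boldQ_step (fun a => (M (p + k)) a) (hMm _) (hMp _)
          (hGmeas _) (hGpos _) hN1 hf hfb y
      have hg' : Measurable fun a : X (p + k) => G (p + k) a * ∫ w, f w ∂((M (p + k)) a) :=
        (hGmeas _).mul (aux_measurable_integral _ (hMm _) (hMp _) hf)
      have hg'b : ∀ a, |G (p + k) a * ∫ w, f w ∂((M (p + k)) a)| ≤ CG (p + k) * C := fun a => by
        haveI := hMp (p + k) a
        rw [abs_mul]
        exact mul_le_mul (hCGabs _ _) (aux_abs_integral_le _ hfb) (abs_nonneg _) (hCG0 _)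
      calc Qop (S := fun q => Fin N1 → X q)
            (fun l y => bootStep (fun a => M l a) (G l) y)
            (fun l y => (N1 : ℝ)⁻¹ * ∑ i, G l (y i)) p (k + 1)
            (fun z => (N1 : ℝ)⁻¹ * ∑ i, f (z i)) x
          = Qop (S := fun q => Fin N1 → X q)
            (fun l y => bootStep (fun a => M l a) (G l) y)
            (fun l y => (N1 : ℝ)⁻¹ * ∑ i, G l (y i)) p k
            (fun y : Fin N1 → X (p + k) =>
              ((N1:ℝ)⁻¹ * ∑ i, G (p + k) (y i)) *
                ∫ z, (N1:ℝ)⁻¹ * ∑ i, f (z i)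
                  ∂(bootStep (fun a => M (p + k) a) (G (p + k)) y)) x := rfl
        _ = Qop (S := fun q => Fin N1 → X q)
            (fun l y => bootStep (fun a => M l a) (G l) y)
            (fun l y => (N1 : ℝ)⁻¹ * ∑ i, G l (y i)) p k
            (fun y => (N1:ℝ)⁻¹ * ∑ i,
              (G (p + k) (y i) * ∫ w, f w ∂((M (p + k)) (y i)))) x := by rw [hfun]
        _ = (N1 : ℝ)⁻¹ * ∑ i, Qop (S := X) (fun l a => M l a) G p k
              (fun a => G (p + k) a * ∫ w, f w ∂((M (p + k)) a)) (x i) :=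
            ih _ hg' _ (mul_nonneg (hCG0 _) hC0) hg'b x
        _ = (N1 : ℝ)⁻¹ * ∑ i, Qop (S := X) (fun l a => M l a) G p (k + 1) f (x i) := rfl
  -- lifted gamma identity
  have keyB : ∀ (p : ℕ) (g : X p → ℝ), Measurable g → ∀ C : ℝ, (∀ a, |g a| ≤ C) →
      ∫ z, (N1:ℝ)⁻¹ * ∑ i, g (z i)
          ∂(gammaSeq (Measure.pi fun _ : Fin N1 => η0)
            (fun l y => bootStep (fun a => M l a) (G l) y)
            (fun l y => (N1 : ℝ)⁻¹ * ∑ i, G l (y i)) p)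
        = ∫ a, g a ∂(gammaSeq η0 (fun l a => M l a) G p) := by
    intro p
    induction p with
    | zero => intro g hg C hgb; exact aux_integral_lift_pi η0 hN1 hg hgb
    | succ p ih =>
      intro g hg C hgb
      rw [aux_gamma_step (Measure.pi fun _ : Fin N1 => η0)
          (fun l y => bootStep (fun a => M l a) (G l) y) hbm hbp
          (fun l y => (N1 : ℝ)⁻¹ * ∑ i, G l (y i)) hbGm hbG0 CG hbGub p
          (hliftm _ g hg) (hliftb _ g C hgb)]
      rw [aux_gamma_step η0 (fun l a => (M l) a) hMm hMp G hGmeas hG0 CG hGub p hg hgb]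
      have hfun : ∀ y : Fin N1 → X p,
          ((N1:ℝ)⁻¹ * ∑ i, G p (y i)) *
              ∫ z, (N1:ℝ)⁻¹ * ∑ i, g (z i) ∂(bootStep (fun a => M p a) (G p) y)
            = (N1:ℝ)⁻¹ * ∑ i, (G p (y i) * ∫ w, g w ∂((M p) (y i))) := fun y =>
        aux_boldQ_step (fun a => (M p) a) (hMm _) (hMp _) (hGmeas _) (hGpos _) hN1 hg hgb y
      rw [integral_congr_ae (Eventually.of_forall hfun)]
      have hg' : Measurable fun a : X p => G p a * ∫ w, g w ∂((M p) a) :=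
        (hGmeas _).mul (aux_measurable_integral _ (hMm _) (hMp _) hg)
      have hg'b : ∀ a, |G p a * ∫ w, g w ∂((M p) a)| ≤ CG p * C := fun a => by
        haveI := hMp p a
        rw [abs_mul]
        exact mul_le_mul (hCGabs _ _) (aux_abs_integral_le _ hgb) (abs_nonneg _) (hCG0 _)
      exact ih _ hg' _ hg'b
  refine ⟨?_, ?_, ?_⟩
  · intro p f hf hfb x
    obtain ⟨C, hC⟩ := hfb
    exact key2 p 1 f hf (max C 0) (le_max_right _ _)
      (fun y => le_trans (hC y) (le_max_left _ _)) x
  · intro p k f hf hfb x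
    obtain ⟨C, hC⟩ := hfb
    exact key2 p k f hf (max C 0) (le_max_right _ _)
      (fun y => le_trans (hC y) (le_max_left _ _)) x
  · intro p k f hf hfb x
    obtain ⟨C0, hC0'⟩ := hfb
    set C : ℝ := max C0 0 with hCdef
    have hC0 : 0 ≤ C := le_max_right _ _
    have hfb' : ∀ y, |f y| ≤ C := fun y => le_trans (hC0' y) (le_max_left _ _)
    haveI : IsFiniteMeasure (gammaSeq η0 (fun l a => (M l) a) G p) :=
      aux_gamma_finite η0 (fun l a => (M l) a) hMm hMp G CG hGub p
    haveI : IsFiniteMeasure (gammaSeq (Measure.pi fun _ : Fin N1 => η0)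
        (fun l y => bootStep (fun a => M l a) (G l) y)
        (fun l y => (N1 : ℝ)⁻¹ * ∑ i, G l (y i)) p) :=
      aux_gamma_finite _ _ hbm hbp _ CG hbGub p
    have hone : ∀ (T : Type _), (fun _ : T => (1:ℝ))
        = fun _ : T => (N1:ℝ)⁻¹ * ∑ _i : Fin N1, (1:ℝ) := by
      intro T
      funext z
      rw [Finset.sum_const, Finset.card_univ, Fintype.card_fin, nsmul_eq_mul, mul_one]
      field_simp
    obtain ⟨hQm, D, hD0, hDb⟩ := aux_Qop_meas_bdd (fun l a => (M l) a) hMm hMp G hGmeas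
      CG hCG0 hCGabs p k (fun _ => (1:ℝ)) measurable_const 1 one_pos.le (fun _ => by norm_num)
    have h1 : ∀ z : Fin N1 → X p,
        Qop (S := fun q => Fin N1 → X q)
          (fun l y => bootStep (fun a => M l a) (G l) y)
          (fun l y => (N1 : ℝ)⁻¹ * ∑ i, G l (y i)) p k
          (fun _ => (1:ℝ)) z
        = (N1:ℝ)⁻¹ * ∑ i, Qop (S := X) (fun l a => M l a) G p k (fun _ => (1:ℝ)) (z i) := by
      intro z
      rw [hone (Fin N1 → X (p + k))]
      exact key2 p k _ measurable_const 1 one_pos.le (fun _ => by norm_num) z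
    have hmass : ((gammaSeq (Measure.pi fun _ : Fin N1 => η0)
          (fun l y => bootStep (fun a => M l a) (G l) y)
          (fun l y => (N1 : ℝ)⁻¹ * ∑ i, G l (y i)) p) Set.univ).toReal
        = ((gammaSeq η0 (fun l a => (M l) a) G p) Set.univ).toReal := by
      have h2 := keyB p (fun _ => (1:ℝ)) measurable_const 1 (fun _ => by norm_num)
      rw [integral_congr_ae (Eventually.of_forall fun z => (congrFun (hone (Fin N1 → X p)) z).symm)] at h2
      simp [MeasureTheory.integral_const, smul_eq_mul] at h2; exact h2
    have hDen : ∫ z, Qop (S := fun q => Fin N1 → X q)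
          (fun l y => bootStep (fun a => M l a) (G l) y)
          (fun l y => (N1 : ℝ)⁻¹ * ∑ i, G l (y i)) p k (fun _ => (1:ℝ)) z
          ∂(etaSeq (Measure.pi fun _ : Fin N1 => η0)
            (fun l y => bootStep (fun a => M l a) (G l) y)
            (fun l y => (N1 : ℝ)⁻¹ * ∑ i, G l (y i)) p)
        = ∫ w, Qop (S := X) (fun l a => M l a) G p k (fun _ => (1:ℝ)) w
            ∂(etaSeq η0 (fun l a => M l a) G p) := by
      rw [integral_congr_ae (Eventually.of_forall h1)]
      rw [FKisland.etaSeq, FKisland.etaSeq, integral_smul_measure, integral_smul_measure]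
      rw [keyB p _ hQm D hDb]
      rw [ENNReal.toReal_inv, ENNReal.toReal_inv, hmass]
    simp only [FKisland.Qbar]
    rw [key2 p k f hf C hC0 hfb' x, hDen, mul_div_assoc, Finset.sum_div]
end
end

section
/- Let boldM_{p} be the ESS particle kernel from (X_{p-1} × ℝ₊)^{N1} to (X_p × ℝ₊)^{N1} associated with a threshold set Θ_{p-1,α}. Then for every weighted configuration ((x^1,w^1),…,(x^{N1},w^{N1})) with Σ_i w^i G_{p-1}(x^i) > 0 and every bounded measurable f on X_p, ∫ boldM_{p}(x, d y) [Σ_i w'^i f(y^i) / Σ_i w'^i] = Σ_i w^i G_{p-1}(x^i) M_p f(x^i) / Σ_i w^i G_{p-1}(x^i), where (y^i, w'^i) denote the new particles and weights; i.e., the identity holds on both the no-resampling and the resampling branches of the kernel. -/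
open MeasureTheory ProbabilityTheory Filter Finset
open scoped ENNReal NNReal Topology Classical

noncomputable section

open FKisland

lemma map_eval_pi' {ι : Type*} [Fintype ι] {E : ι → Type*} [∀ i, MeasurableSpace (E i)]
    (μ : ∀ i, Measure (E i)) [∀ i, IsProbabilityMeasure (μ i)] (i : ι) :
    (Measure.pi μ).map (Function.eval i) = μ i := by
  ext s hs
  rw [Measure.map_apply (measurable_pi_apply i) hs]
  have h : Function.eval i ⁻¹' s
      = Set.pi Set.univ (Function.update (fun j => Set.univ) i s) := by
    ext z
    simp only [Set.mem_preimage, Set.mem_univ_pi, Function.update_apply, Function.eval]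
    constructor
    · intro hz j
      by_cases hj : j = i
      · subst hj; simp [hz]
      · simp [hj]
    · intro hz; have := hz i; simpa using this
  rw [h, Measure.pi_pi]
  rw [Finset.prod_eq_single i (fun j _ hj => by simp [Function.update_apply, hj]) (by simp)]
  simp

lemma integral_eval_pi' {ι : Type*} [Fintype ι] {E : ι → Type*} [∀ i, MeasurableSpace (E i)]
    (μ : ∀ i, Measure (E i)) [∀ i, IsProbabilityMeasure (μ i)] (i : ι)
    (g : E i → ℝ) (hg : AEStronglyMeasurable g (μ i)) :
    ∫ z, g (z i) ∂Measure.pi μ = ∫ x, g x ∂μ i := by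
  rw [← map_eval_pi' μ i] at hg ⊢
  rw [integral_map (measurable_pi_apply i).aemeasurable hg]

lemma integrable_of_bdd' {γ : Type*} [MeasurableSpace γ] {μ : Measure γ} [IsFiniteMeasure μ]
    {g : γ → ℝ} (hg : AEStronglyMeasurable g μ) {C : ℝ} (hC : ∀ x, |g x| ≤ C) :
    Integrable g μ :=
  (integrable_const C).mono' hg (ae_of_all _ (by simpa [Real.norm_eq_abs] using hC))

/-- One ESS selection/mutation step on weighted configurations: on both
branches of the kernel, the conditional expectation of the weighted empirical average of
`f` equals `Σ_i w^i G_{p-1}(x^i) M_p f(x^i) / Σ_i w^i G_{p-1}(x^i)`. -/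
theorem statement12 {α β : Type*} [MeasurableSpace α] [MeasurableSpace β]
    (M : Kernel α β) [IsMarkovKernel M]
    (G : α → ℝ) (hGmeas : Measurable G)
    (hGbdd : ∃ C, ∀ x, G x ≤ C) (hGpos : ∀ x, 0 < G x)
    {N1 : ℕ} (hN1 : 1 ≤ N1) (a : ℝ)
    (xw : Fin N1 → α × ℝ) (hw : ∀ i, 0 ≤ (xw i).2)
    (hsum : 0 < ∑ i, (xw i).2 * G (xw i).1)
    (f : β → ℝ) (hf : Measurable f) (hfb : ∃ C, ∀ y, |f y| ≤ C) :
    ∫ z, (∑ i, (z i).2 * f (z i).1) / (∑ i, (z i).2)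
        ∂(essStep (fun c => M c) G a xw)
      = (∑ i, (xw i).2 * G (xw i).1 * ∫ y, f y ∂(M (xw i).1))
          / ∑ i, (xw i).2 * G (xw i).1 := by
  obtain ⟨C, hC⟩ := hfb
  set c : Fin N1 → ℝ := fun i => (xw i).2 * G (xw i).1 with hc_def
  have hc : ∀ i, 0 ≤ c i := fun i => mul_nonneg (hw i) (hGpos _).le
  have hS : 0 < ∑ i, c i := hsum
  rw [essStep]
  split_ifs with hcond
  · -- branch 1: no resampling
    set μ : Fin N1 → Measure (β × ℝ) :=
      fun i => (M (xw i).1).map fun y => (y, c i) with hμ_def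
    haveI : ∀ i, IsProbabilityMeasure (μ i) := fun i =>
      Measure.isProbabilityMeasure_map (measurable_id.prodMk measurable_const).aemeasurable
    have hae : ∀ᵐ z ∂Measure.pi μ, ∀ i, (z i).2 = c i := by
      rw [MeasureTheory.ae_all_iff]
      intro i
      have hmeas : Measurable (fun y : β => (y, c i)) :=
        measurable_id.prodMk measurable_const
      have hnull : μ i {p : β × ℝ | p.2 ≠ c i} = 0 := by
        show ((M (xw i).1).map fun y => (y, c i)) {p : β × ℝ | p.2 ≠ c i} = 0
        have hs : MeasurableSet {p : β × ℝ | p.2 ≠ c i} :=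
          measurable_snd (measurableSet_singleton (c i)).compl
        rw [Measure.map_apply hmeas hs]
        have hemp : (fun y : β => (y, c i)) ⁻¹' {p : β × ℝ | p.2 ≠ c i} = ∅ := by
          ext y; simp
        rw [hemp]
        simp
      refine ae_iff.2 ?_
      exact Measure.pi_eval_preimage_null μ hnull
    have key : ∫ z, (∑ i, (z i).2 * f (z i).1) / (∑ i, (z i).2) ∂Measure.pi μ
        = ∫ z, (∑ i, c i * f ((z i).1)) / (∑ i, c i) ∂Measure.pi μ := by
      refine integral_congr_ae (hae.mono fun z hz => ?_)
      have h1 : (∑ i, (z i).2 * f (z i).1) = ∑ i, c i * f ((z i).1) :=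
        Finset.sum_congr rfl fun i _ => by rw [hz i]
      have h2 : (∑ i, (z i).2) = ∑ i, c i :=
        Finset.sum_congr rfl fun i _ => by rw [hz i]
      dsimp only
      rw [h1, h2]
    rw [key]
    have hint : ∀ i : Fin N1, Integrable (fun z : Fin N1 → β × ℝ => f ((z i).1)) (Measure.pi μ) :=
      fun i => integrable_of_bdd'
        ((hf.comp (measurable_fst.comp (measurable_pi_apply i))).aestronglyMeasurable)
        (fun z => hC _)
    rw [integral_div, integral_finset_sum _ (fun i _ => (hint i).const_mul (c i))]
    congr 1
    refine Finset.sum_congr rfl fun i _ => ?_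
    rw [integral_const_mul]
    congr 1
    have hmeas : Measurable (fun y : β => (y, c i)) := measurable_id.prodMk measurable_const
    have hfm : AEStronglyMeasurable (fun p : β × ℝ => f p.1)
        ((M (xw i).1).map fun y => (y, c i)) :=
      (show Measurable fun p : β × ℝ => f p.1 from hf.comp measurable_fst).aestronglyMeasurable
    have := integral_eval_pi' μ i (fun p => f p.1)
      (show Measurable fun p : β × ℝ => f p.1 from hf.comp measurable_fst).aestronglyMeasurable
    rw [this]
    show ∫ p, (fun p : β × ℝ => f p.1) p ∂((M (xw i).1).map fun y => (y, c i)) = _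
    rw [integral_map hmeas.aemeasurable hfm]
  · -- branch 2: resampling
    simp only [hc_def] at hS
    have hSne : (∑ i, (xw i).2 * G (xw i).1) ≠ 0 := ne_of_gt hS
    have hwG : ∀ i : Fin N1, 0 ≤ (xw i).2 * G (xw i).1 :=
      fun i => mul_nonneg (hw i) (hGpos _).le
    set S' : ℝ≥0∞ := ∑ k, ENNReal.ofReal ((xw k).2 * G (xw k).1) with hS'
    have hS'eq : S' = ENNReal.ofReal (∑ i, (xw i).2 * G (xw i).1) := by
      rw [hS', ← ENNReal.ofReal_sum_of_nonneg (fun i _ => hwG i)]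
    have hS'ne : S' ≠ 0 := by
      rw [hS'eq]; exact (ENNReal.ofReal_pos.2 hS).ne'
    have hS'top : S' ≠ ⊤ := by rw [hS'eq]; exact ENNReal.ofReal_ne_top
    set ν : Measure β :=
      S'⁻¹ • ∑ j, ENNReal.ofReal ((xw j).2 * G (xw j).1) • (M (xw j).1 : Measure β) with hν
    haveI : IsProbabilityMeasure ν := by
      constructor
      rw [hν]
      simp only [Measure.smul_apply, Measure.coe_finset_sum, Finset.sum_apply,
        measure_univ, smul_eq_mul, mul_one]
      exact ENNReal.inv_mul_cancel hS'ne hS'top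
    have hmeas1 : Measurable (fun y : β => (y, (1 : ℝ))) :=
      measurable_id.prodMk measurable_const
    set μ0 : Measure (β × ℝ) := ν.map (fun y => (y, (1 : ℝ))) with hμ0
    haveI : IsProbabilityMeasure μ0 := Measure.isProbabilityMeasure_map hmeas1.aemeasurable
    have hae : ∀ᵐ z ∂Measure.pi (fun _ : Fin N1 => μ0), ∀ i : Fin N1, (z i).2 = (1 : ℝ) := by
      rw [MeasureTheory.ae_all_iff]
      intro i
      have hs : MeasurableSet {p : β × ℝ | p.2 ≠ (1 : ℝ)} :=
        measurable_snd (measurableSet_singleton (1 : ℝ)).compl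
      have hnull : μ0 {p : β × ℝ | p.2 ≠ (1 : ℝ)} = 0 := by
        rw [hμ0, Measure.map_apply hmeas1 hs]
        have hemp : (fun y : β => (y, (1 : ℝ))) ⁻¹' {p : β × ℝ | p.2 ≠ (1 : ℝ)} = ∅ := by
          ext y; simp
        rw [hemp]
        simp
      refine ae_iff.2 ?_
      exact Measure.pi_eval_preimage_null (fun _ : Fin N1 => μ0) hnull
    have key : ∫ z, (∑ i, (z i).2 * f (z i).1) / (∑ i, (z i).2)
          ∂Measure.pi (fun _ : Fin N1 => μ0)
        = ∫ z, (∑ i, f ((z i).1)) / (N1 : ℝ) ∂Measure.pi (fun _ : Fin N1 => μ0) := by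
      refine integral_congr_ae (hae.mono fun z hz => ?_)
      have h1 : (∑ i, (z i).2 * f (z i).1) = ∑ i, f ((z i).1) :=
        Finset.sum_congr rfl fun i _ => by rw [hz i, one_mul]
      have h2 : (∑ i, (z i).2) = (N1 : ℝ) := by
        rw [Finset.sum_congr rfl fun i _ => hz i]
        simp
      dsimp only
      rw [h1, h2]
    rw [key]
    have hintM : ∀ (m : Measure β) [IsFiniteMeasure m], Integrable f m := fun m _ =>
      integrable_of_bdd' hf.aestronglyMeasurable hC
    have hint : ∀ i : Fin N1,
        Integrable (fun z : Fin N1 → β × ℝ => f ((z i).1))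
          (Measure.pi (fun _ : Fin N1 => μ0)) :=
      fun i => integrable_of_bdd'
        ((hf.comp (measurable_fst.comp (measurable_pi_apply i))).aestronglyMeasurable)
        (fun z => hC _)
    rw [integral_div, integral_finset_sum _ (fun i _ => hint i)]
    have heval : ∀ i : Fin N1,
        ∫ z, f ((z i).1) ∂Measure.pi (fun _ : Fin N1 => μ0) = ∫ y, f y ∂ν := by
      intro i
      have hfm : AEStronglyMeasurable (fun p : β × ℝ => f p.1) (ν.map fun y => (y, (1 : ℝ))) :=
        (show Measurable fun p : β × ℝ => f p.1 from hf.comp measurable_fst).aestronglyMeasurable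
      have h := integral_eval_pi' (fun _ : Fin N1 => μ0) i (fun p => f p.1)
        (show Measurable fun p : β × ℝ => f p.1 from hf.comp measurable_fst).aestronglyMeasurable
      rw [h]
      show ∫ p, (fun p : β × ℝ => f p.1) p ∂(ν.map fun y => (y, (1 : ℝ))) = _
      rw [integral_map hmeas1.aemeasurable hfm]
    rw [Finset.sum_congr rfl fun i _ => heval i, Finset.sum_const, Finset.card_univ,
      Fintype.card_fin, nsmul_eq_mul]
    have hN1' : (N1 : ℝ) ≠ 0 := Nat.cast_ne_zero.2 (by omega)
    rw [show ((N1 : ℝ) * ∫ y, f y ∂ν) / (N1 : ℝ) = ∫ y, f y ∂ν by field_simp]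
    simp only [hc_def]
    -- now compute ∫ f ∂ν
    haveI hfinj : ∀ j : Fin N1,
        IsFiniteMeasure (ENNReal.ofReal ((xw j).2 * G (xw j).1) • (M (xw j).1 : Measure β)) :=
      fun j => ⟨by
        simp only [Measure.smul_apply, measure_univ, smul_eq_mul, mul_one]
        exact ENNReal.ofReal_lt_top⟩
    rw [hν, integral_smul_measure,
      integral_finset_sum_measure (fun j _ => hintM _),
      hS'eq, ENNReal.toReal_inv, ENNReal.toReal_ofReal hS.le]
    have hterm : ∀ j : Fin N1,
        ∫ y, f y ∂(ENNReal.ofReal ((xw j).2 * G (xw j).1) • (M (xw j).1 : Measure β))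
          = (xw j).2 * G (xw j).1 * ∫ y, f y ∂(M (xw j).1) := by
      intro j
      rw [integral_smul_measure, ENNReal.toReal_ofReal (hwG j), smul_eq_mul]
    rw [Finset.sum_congr rfl fun j _ => hterm j, div_eq_mul_inv, mul_comm, smul_eq_mul]
end
end
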